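/- If 1 ≤ r ≤ n−2, then I_r(PB_n) = ⟨D_r(PB_n) ∪ D_{r−1}(PB_n)⟩ = ⟨E(D_r(PB_n) ∪ D_{r−1}(PB_n))⟩. -/

import Mathlib

/-!
Partial Brauer diagrams on `n` points are formalized as set partitions
(equivalence relations, i.e. `Setoid`s) of the vertex set
`{1,…,n} ∪ {1',…,n'}`, encoded as `Fin n ⊕ Fin n`
(`Sum.inl i` is the upper vertex `i`, `Sum.inr i` is the lower vertex `i'`),
all of whose blocks have size at most 2.  The product of two diagrams is
defined via connectivity (paths) in the product graph, and the involution `*`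
by interchanging the two rows of vertices.
-/

noncomputable section

open scoped Classical

/-- Vertices of a diagram on `n` points. -/
abbrev PBV (n : ℕ) := Fin n ⊕ Fin n

/-- A "diagram candidate": an arbitrary set partition of the vertices. -/
abbrev Dgm (n : ℕ) := Setoid (PBV n)

/-- The equivalence relation ("joined by a path") generated by a relation. -/
inductive RGen {V : Type*} (r : V → V → Prop) : V → V → Prop
  | rel {x y : V} : r x y → RGen r x y
  | refl (x : V) : RGen r x x
  | symm {x y : V} : RGen r x y → RGen r y x
  | trans {x y z : V} : RGen r x y → RGen r y z → RGen r x z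

namespace Dgm

variable {n : ℕ}

/-- Vertices of the product graph: top, middle and bottom rows. -/
abbrev V3 (n : ℕ) := Fin n ⊕ (Fin n ⊕ Fin n)

/-- The first factor occupies the top and middle rows of the product graph. -/
def topMid : PBV n → V3 n
  | Sum.inl i => Sum.inl i
  | Sum.inr i => Sum.inr (Sum.inl i)

/-- The second factor occupies the middle and bottom rows of the product graph. -/
def midBot : PBV n → V3 n
  | Sum.inl i => Sum.inr (Sum.inl i)
  | Sum.inr i => Sum.inr (Sum.inr i)

/-- The product diagram occupies the top and bottom rows of the product graph. -/
def topBot : PBV n → V3 n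
  | Sum.inl i => Sum.inl i
  | Sum.inr i => Sum.inr (Sum.inr i)

/-- The edges of the product graph `Γ(α, β)`. -/
def prodEdges (α β : Dgm n) (x y : V3 n) : Prop :=
  (∃ a b : PBV n, α.r a b ∧ x = topMid a ∧ y = topMid b) ∨
  (∃ a b : PBV n, β.r a b ∧ x = midBot a ∧ y = midBot b)

/-- The product of two diagrams: two vertices lie in the same block of `α β`
iff they are joined by a path in the product graph `Γ(α, β)`. -/
def pmul (α β : Dgm n) : Dgm n where
  r x y := RGen (prodEdges α β) (topBot x) (topBot y)
  iseqv := ⟨fun _ => RGen.refl _, fun h => h.symm, fun h₁ h₂ => h₁.trans h₂⟩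

/-- Interchanging the upper and the lower vertices. -/
def swapUD : PBV n → PBV n
  | Sum.inl i => Sum.inr i
  | Sum.inr i => Sum.inl i

/-- The involution `α ↦ α*` (reflection in a horizontal axis). -/
def pstar (α : Dgm n) : Dgm n := Setoid.comap swapUD α

/-- All blocks of `α` have size at most 2. -/
def IsPB (α : Dgm n) : Prop :=
  ∀ x y z : PBV n, α.r x y → α.r x z → x = y ∨ x = z ∨ y = z

/-- The partial Brauer monoid `PB_n` (as a set of diagrams). -/
def PBset (n : ℕ) : Set (Dgm n) := {α | IsPB α}

/-- The position of a vertex in the linear order `1 < 2 < ⋯ < n < n' < ⋯ < 1'`. -/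
def vpos : PBV n → ℕ
  | Sum.inl i => (i : ℕ)
  | Sum.inr i => 2 * n - 1 - (i : ℕ)

/-- Planarity: no two blocks cross in the order `1 < ⋯ < n < n' < ⋯ < 1'`. -/
def IsPlanar (α : Dgm n) : Prop :=
  ∀ a b c d : PBV n, α.r a b → α.r c d →
    vpos a < vpos c → vpos c < vpos b → vpos b < vpos d → False

/-- The Motzkin monoid `M_n` (as a set of diagrams). -/
def Mset (n : ℕ) : Set (Dgm n) := {α | IsPB α ∧ IsPlanar α}

/-- The domain of `α`: upper points lying in a transversal block. -/
def domSet (α : Dgm n) : Set (Fin n) := {i | ∃ j, α.r (Sum.inl i) (Sum.inr j)}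

/-- The codomain of `α`: lower points lying in a transversal block. -/
def codomSet (α : Dgm n) : Set (Fin n) := {i | ∃ j, α.r (Sum.inr i) (Sum.inl j)}

/-- The rank of a diagram: the number of its transversal blocks (for a diagram
with blocks of size at most 2, each transversal block contains exactly one
upper point, so this is the size of the domain). -/
def prank (α : Dgm n) : ℕ := (domSet α).ncard

/-- `α` is an idempotent. -/
def IsIdpt (α : Dgm n) : Prop := pmul α α = α

/-- `α` is a projection. -/
def IsProj (α : Dgm n) : Prop := pmul α α = α ∧ pstar α = α

/-- The D-class `D_r(PB_n)`. -/
def DPB (n r : ℕ) : Set (Dgm n) := {α | α ∈ PBset n ∧ prank α = r}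

/-- The ideal `I_r(PB_n)`. -/
def IPB (n r : ℕ) : Set (Dgm n) := {α | α ∈ PBset n ∧ prank α ≤ r}

/-- The D-class `D_r(M_n)`. -/
def DM (n r : ℕ) : Set (Dgm n) := {α | α ∈ Mset n ∧ prank α = r}

/-- The ideal `I_r(M_n)`. -/
def IM (n r : ℕ) : Set (Dgm n) := {α | α ∈ Mset n ∧ prank α ≤ r}

end Dgm

/-- Membership in the closure of a subset under a binary operation. -/
inductive MClo {γ : Type*} (m : γ → γ → γ) (X : Set γ) : γ → Prop
  | base {x : γ} : x ∈ X → MClo m X x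
  | mul {x y : γ} : MClo m X x → MClo m X y → MClo m X (m x y)

/-- The subsemigroup `⟨X⟩` generated by the subset `X`. -/
def genSet {γ : Type*} (m : γ → γ → γ) (X : Set γ) : Set γ := {x | MClo m X x}

/-- The rank of `T`: the least size of a generating set. -/
noncomputable def rnk {γ : Type*} (m : γ → γ → γ) (T : Set γ) : ℕ :=
  sInf {k | ∃ X : Finset γ, X.card = k ∧ genSet m ↑X = T}

/-- The idempotent rank of `T`: the least size of a generating set consisting
of idempotents. -/
noncomputable def idrnk {γ : Type*} (m : γ → γ → γ) (T : Set γ) : ℕ :=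
  sInf {k | ∃ X : Finset γ, X.card = k ∧ (∀ x ∈ X, m x x = x) ∧ genSet m ↑X = T}

/-- `T` is idempotent-generated. -/
def IdptGen {γ : Type*} (m : γ → γ → γ) (T : Set γ) : Prop :=
  genSet m {x ∈ T | m x x = x} = T

open Dgm
/-- `a(m)`: `a(0) = a(1) = 1` and `a(m) = a(m-1) + (m-1)·a(m-2)`. -/
def aSeq : ℕ → ℕ
  | 0 => 1
  | 1 => 1
  | (m + 2) => aSeq (m + 1) + (m + 1) * aSeq m

/-- The double factorial `k!!`, with the convention `k!! = 0` for even `k ≥ 0`. -/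
def oddDF : ℕ → ℕ
  | 0 => 0
  | 1 => 1
  | (k + 2) => (k + 2) * oddDF k

namespace Dgm

variable {n : ℕ}

/-- `{x}` is a singleton upper block of `α`. -/
def UpperSingleton (α : Dgm n) (x : Fin n) : Prop :=
  ∀ y : PBV n, α.r (Sum.inl x) y → y = Sum.inl x

/-- `{x'}` is a singleton lower block of `α`. -/
def LowerSingleton (α : Dgm n) (x : Fin n) : Prop :=
  ∀ y : PBV n, α.r (Sum.inr x) y → y = Sum.inr x

/-- The upper point `x` is nested: some upper block `{u,v}` has `u < x < v`. -/
def UpperNested (α : Dgm n) (x : Fin n) : Prop :=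
  ∃ u v : Fin n, α.r (Sum.inl u) (Sum.inl v) ∧ u < x ∧ x < v

/-- The lower point `x'` is nested: some lower block `{u',v'}` has `u < x < v`. -/
def LowerNested (α : Dgm n) (x : Fin n) : Prop :=
  ∃ u v : Fin n, α.r (Sum.inr u) (Sum.inr v) ∧ u < x ∧ x < v

/-- `α` has no unnested singleton (upper or lower) block. -/
def NoUnnestedSingleton (α : Dgm n) : Prop :=
  (∀ x, UpperSingleton α x → UpperNested α x) ∧
  (∀ x, LowerSingleton α x → LowerNested α x)

/-- A chain of `d` nested upper hooks of `α` around the upper point `x`: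
`u_{d-1} < ⋯ < u_0 < x < v_0 < ⋯ < v_{d-1}` with each `{u_i, v_i}` a block.
The singleton upper block `{x}` has nesting depth at most `k` iff there is no
such chain of length `k + 1`. -/
def UpperHookChain (α : Dgm n) (x : Fin n) (d : ℕ) : Prop :=
  ∃ u v : Fin d → Fin n,
    (∀ i, α.r (Sum.inl (u i)) (Sum.inl (v i))) ∧
    (∀ i, u i < x ∧ x < v i) ∧ StrictAnti u ∧ StrictMono v

/-- A chain of `d` nested lower hooks of `α` around the lower point `x'`. -/
def LowerHookChain (α : Dgm n) (x : Fin n) (d : ℕ) : Prop :=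
  ∃ u v : Fin d → Fin n,
    (∀ i, α.r (Sum.inr (u i)) (Sum.inr (v i))) ∧
    (∀ i, u i < x ∧ x < v i) ∧ StrictAnti u ∧ StrictMono v

/-- `λ_A`: the planar diagram joining the `k`-th smallest element of `A`
(upper) to `k` (lower), all other blocks being singletons. -/
def lamd (A : Finset (Fin n)) : Dgm n :=
  Setoid.ker (fun x : PBV n =>
    match x with
    | Sum.inl a =>
        if ha : a ∈ A then
          (Sum.inr (((A.orderIsoOfFin rfl).symm ⟨a, ha⟩ : Fin A.card) : ℕ) : ℕ ⊕ ℕ)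
        else Sum.inl (a : ℕ)
    | Sum.inr j => Sum.inr (j : ℕ))

/-- `ρ_A = (λ_A)*`. -/
def rhod (A : Finset (Fin n)) : Dgm n := pstar (lamd A)

/-- The diagram whose 2-element blocks are exactly `{i, (π i)'}` for `i < r`. -/
def permDgm (n r : ℕ) (π : Equiv.Perm (Fin r)) : Dgm n :=
  Setoid.ker (fun x : PBV n =>
    match x with
    | Sum.inl a =>
        if h : (a : ℕ) < r then (Sum.inr ((π ⟨(a : ℕ), h⟩ : Fin r) : ℕ) : ℕ ⊕ ℕ)
        else Sum.inl (a : ℕ)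
    | Sum.inr j => Sum.inr (j : ℕ))

/-- The set `S_{[r]} ⊆ PB_n`. -/
def SBr (n r : ℕ) : Set (Dgm n) := {γ | ∃ π : Equiv.Perm (Fin r), γ = permDgm n r π}

/-- The domain of `α` as a `Finset`. -/
def domFinset (α : Dgm n) : Finset (Fin n) :=
  Finset.univ.filter fun i => i ∈ domSet α

/-- The codomain of `α` as a `Finset`. -/
def codomFinset (α : Dgm n) : Finset (Fin n) :=
  Finset.univ.filter fun i => i ∈ codomSet α

/-- `A ⊆ {1,…,n}` is cosparse: its complement contains no two consecutive
elements. -/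
def CosparseS (A : Set (Fin n)) : Prop :=
  ∀ i j : Fin n, i ∉ A → j ∉ A → (j : ℕ) ≠ (i : ℕ) + 1

/-- `id_A`: the diagram with blocks `{a, a'}` for `a ∈ A`, all other blocks
being singletons. -/
def idd (A : Set (Fin n)) : Dgm n :=
  Setoid.ker (fun x : PBV n =>
    match x with
    | Sum.inl a => if a ∈ A then (Sum.inr (a : ℕ) : ℕ ⊕ ℕ) else Sum.inl (a : ℕ)
    | Sum.inr j => Sum.inr (j : ℕ))

end Dgm

namespace PBWork
open Dgm Function

variable {n : ℕ}

@[simp] lemma topMid_inl (i : Fin n) : (topMid (Sum.inl i) : V3 n) = Sum.inl i := rfl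
@[simp] lemma topMid_inr (i : Fin n) : (topMid (Sum.inr i) : V3 n) = Sum.inr (Sum.inl i) := rfl
@[simp] lemma midBot_inl (i : Fin n) : (midBot (Sum.inl i) : V3 n) = Sum.inr (Sum.inl i) := rfl
@[simp] lemma midBot_inr (i : Fin n) : (midBot (Sum.inr i) : V3 n) = Sum.inr (Sum.inr i) := rfl
@[simp] lemma topBot_inl (i : Fin n) : (topBot (Sum.inl i) : V3 n) = Sum.inl i := rfl
@[simp] lemma topBot_inr (i : Fin n) : (topBot (Sum.inr i) : V3 n) = Sum.inr (Sum.inr i) := rfl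

lemma topBot_injective : Injective (topBot (n := n)) := by
  rintro (a|a) (b|b) h <;> simp_all

/-- The diagram whose blocks are the orbits (of size ≤ 2) of a function `θ`. -/
def DgmOf (θ : PBV n → PBV n) : Dgm n where
  r x y := x = y ∨ (θ x = y ∧ θ y = x)
  iseqv := by
    refine ⟨fun x => Or.inl rfl, ?_, ?_⟩
    · rintro x y (rfl | ⟨h1, h2⟩)
      · exact Or.inl rfl
      · exact Or.inr ⟨h2, h1⟩
    · rintro x y z (rfl | ⟨h1, h2⟩) h
      · exact h
      · rcases h with rfl | ⟨h3, h4⟩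
        · exact Or.inr ⟨h1, h2⟩
        · exact Or.inl (by rw [← h2, h3])

lemma dgmOf_r (θ : PBV n → PBV n) (x y : PBV n) :
    (DgmOf θ).r x y ↔ x = y ∨ (θ x = y ∧ θ y = x) := Iff.rfl

lemma dgmOf_r_invol {θ : PBV n → PBV n} (hθ : Involutive θ) (x y : PBV n) :
    (DgmOf θ).r x y ↔ x = y ∨ θ x = y := by
  rw [dgmOf_r]
  constructor
  · rintro (rfl | ⟨h1, _⟩)
    · exact Or.inl rfl
    · exact Or.inr h1
  · rintro (rfl | h1)
    · exact Or.inl rfl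
    · exact Or.inr ⟨h1, by rw [← h1, hθ]⟩

lemma isPB_dgmOf (θ : PBV n → PBV n) : IsPB (DgmOf θ) := by
  rintro x y z (rfl | ⟨h1, _⟩) (rfl | ⟨h3, _⟩)
  · exact Or.inl rfl
  · exact Or.inl rfl
  · exact Or.inr (Or.inl rfl)
  · exact Or.inr (Or.inr (by rw [← h1, h3]))

/-- Structure theorem: every partial Brauer diagram comes from an involution. -/
lemma exists_invol {α : Dgm n} (hα : IsPB α) :
    ∃ θ : PBV n → PBV n, Involutive θ ∧ α = DgmOf θ := by
  classical
  refine ⟨fun x => if h : ∃ y, α.r x y ∧ y ≠ x then h.choose else x, ?_, ?_⟩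
  · intro x
    by_cases h : ∃ y, α.r x y ∧ y ≠ x
    · simp only [dif_pos h]
      obtain ⟨hr, hne⟩ := h.choose_spec
      set y := h.choose with hy
      have h' : ∃ z, α.r y z ∧ z ≠ y := ⟨x, α.iseqv.symm hr, fun hc => hne hc.symm⟩
      simp only [dif_pos (hy ▸ h' : ∃ z, α.r h.choose z ∧ z ≠ h.choose)]
      obtain ⟨hr', hne'⟩ := h'.choose_spec
      rcases hα y h'.choose x hr' (α.iseqv.symm hr) with h1 | h1 | h1
      · exact absurd h1.symm hne'
      · exact absurd h1 hne
      · exact h1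
    · simp only [dif_neg h]
  · apply Setoid.ext
    intro a b
    constructor
    · intro hab
      by_cases hne : a = b
      · exact Or.inl hne
      · refine Or.inr ⟨?_, ?_⟩
        · have h : ∃ y, α.r a y ∧ y ≠ a := ⟨b, hab, fun hc => hne hc.symm⟩
          simp only [dif_pos h]
          obtain ⟨hr, hne'⟩ := h.choose_spec
          rcases hα a h.choose b hr hab with h1 | h1 | h1
          · exact absurd h1.symm hne'
          · exact absurd h1 hne
          · exact h1
        · have hba := α.iseqv.symm hab
          have h : ∃ y, α.r b y ∧ y ≠ b := ⟨a, hba, hne⟩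
          simp only [dif_pos h]
          obtain ⟨hr, hne'⟩ := h.choose_spec
          rcases hα b h.choose a hr hba with h1 | h1 | h1
          · exact absurd h1.symm hne'
          · exact absurd h1.symm hne
          · exact h1
    · rintro (rfl | ⟨h1, _⟩)
      · exact α.iseqv.refl a
      · by_cases h : ∃ y, α.r a y ∧ y ≠ a
        · simp only [dif_pos h] at h1
          obtain ⟨hr, _⟩ := h.choose_spec
          rw [h1] at hr; exact hr
        · simp only [dif_neg h] at h1
          exact h1 ▸ α.iseqv.refl a

end PBWork

namespace PBWork
open Dgm Function

variable {n : ℕ}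

/-! ### The two involutions on the product graph -/

def hatU (θ : PBV n → PBV n) : V3 n → V3 n
  | Sum.inl i => topMid (θ (Sum.inl i))
  | Sum.inr (Sum.inl m) => topMid (θ (Sum.inr m))
  | Sum.inr (Sum.inr j) => Sum.inr (Sum.inr j)

def hatD (φ : PBV n → PBV n) : V3 n → V3 n
  | Sum.inl i => Sum.inl i
  | Sum.inr (Sum.inl m) => midBot (φ (Sum.inl m))
  | Sum.inr (Sum.inr j) => midBot (φ (Sum.inr j))

@[simp] lemma hatU_topMid (θ : PBV n → PBV n) (a : PBV n) :
    hatU θ (topMid a) = topMid (θ a) := by cases a <;> rfl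

@[simp] lemma hatD_midBot (φ : PBV n → PBV n) (a : PBV n) :
    hatD φ (midBot a) = midBot (φ a) := by cases a <;> rfl

@[simp] lemma hatU_bot (θ : PBV n → PBV n) (j : Fin n) :
    hatU θ (Sum.inr (Sum.inr j)) = Sum.inr (Sum.inr j) := rfl

@[simp] lemma hatD_top (φ : PBV n → PBV n) (i : Fin n) :
    hatD φ (Sum.inl i) = Sum.inl i := rfl

lemma hatU_invol {θ : PBV n → PBV n} (hθ : Involutive θ) : Involutive (hatU θ) := by
  rintro (i | m | j)
  · show hatU θ (topMid (θ (Sum.inl i))) = _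
    rw [hatU_topMid, hθ]; rfl
  · show hatU θ (topMid (θ (Sum.inr m))) = _
    rw [hatU_topMid, hθ]; rfl
  · rfl

lemma hatD_invol {φ : PBV n → PBV n} (hφ : Involutive φ) : Involutive (hatD φ) := by
  rintro (i | m | j)
  · rfl
  · show hatD φ (midBot (φ (Sum.inl m))) = _
    rw [hatD_midBot, hφ]; rfl
  · show hatD φ (midBot (φ (Sum.inr j))) = _
    rw [hatD_midBot, hφ]; rfl

lemma edge_cases {θ φ : PBV n → PBV n} {u v : V3 n}
    (h : prodEdges (DgmOf θ) (DgmOf φ) u v) :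
    v = u ∨ v = hatU θ u ∨ v = hatD φ u := by
  rcases h with ⟨a, b, hab, rfl, rfl⟩ | ⟨a, b, hab, rfl, rfl⟩
  · rcases hab with rfl | ⟨h1, _⟩
    · exact Or.inl rfl
    · exact Or.inr (Or.inl (by rw [hatU_topMid, h1]))
  · rcases hab with rfl | ⟨h1, _⟩
    · exact Or.inl rfl
    · exact Or.inr (Or.inr (by rw [hatD_midBot, h1]))

lemma rgen_hatU {θ φ : PBV n → PBV n} (hθ : Involutive θ) (a : PBV n) :
    RGen (prodEdges (DgmOf θ) (DgmOf φ)) (topMid a) (topMid (θ a)) :=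
  RGen.rel (Or.inl ⟨a, θ a, Or.inr ⟨rfl, hθ a⟩, rfl, rfl⟩)

lemma rgen_hatD {θ φ : PBV n → PBV n} (hφ : Involutive φ) (a : PBV n) :
    RGen (prodEdges (DgmOf θ) (DgmOf φ)) (midBot a) (midBot (φ a)) :=
  RGen.rel (Or.inr ⟨a, φ a, Or.inr ⟨rfl, hφ a⟩, rfl, rfl⟩)

/-! ### Trajectories -/

def traj (s t : V3 n → V3 n) (p : V3 n) : ℕ → V3 n
  | 0 => p
  | k+1 => (if k % 2 = 0 then s else t) (traj s t p k)

@[simp] lemma traj_zero (s t : V3 n → V3 n) (p : V3 n) : traj s t p 0 = p := rfl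

lemma traj_succ (s t : V3 n → V3 n) (p : V3 n) (k : ℕ) :
    traj s t p (k+1) = (if k % 2 = 0 then s else t) (traj s t p k) := rfl

variable {s t : V3 n → V3 n} {p : V3 n}

lemma s_traj_mem (hs : Involutive s) (k : ℕ) :
    s (traj s t p k) ∈ Set.range (traj s t p) := by
  by_cases he : k % 2 = 0
  · exact ⟨k+1, by rw [traj_succ, if_pos he]⟩
  · obtain ⟨m, rfl⟩ : ∃ m, k = m + 1 := ⟨k-1, by omega⟩
    have hm : m % 2 = 0 := by omega
    exact ⟨m, by rw [traj_succ, if_pos hm]; exact (hs _).symm⟩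

lemma t_traj_mem (ht : Involutive t) (htp : t p = p) (k : ℕ) :
    t (traj s t p k) ∈ Set.range (traj s t p) := by
  by_cases he : k % 2 = 0
  · rcases Nat.eq_zero_or_pos k with rfl | hk
    · exact ⟨0, htp.symm⟩
    · obtain ⟨m, rfl⟩ : ∃ m, k = m + 1 := ⟨k-1, by omega⟩
      have hm : ¬ m % 2 = 0 := by omega
      exact ⟨m, by rw [traj_succ, if_neg hm]; exact (ht _).symm⟩
  · exact ⟨k+1, by rw [traj_succ, if_neg he]⟩

lemma rgen_mem {θ φ : PBV n → PBV n} (hθ : Involutive θ) (hφ : Involutive φ)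
    {S : Set (V3 n)} (hU : ∀ u ∈ S, hatU θ u ∈ S) (hD : ∀ u ∈ S, hatD φ u ∈ S)
    {u v : V3 n} (h : RGen (prodEdges (DgmOf θ) (DgmOf φ)) u v) : u ∈ S ↔ v ∈ S := by
  induction h with
  | rel hr =>
    rcases edge_cases hr with h1 | h1 | h1 <;> subst h1
    · exact Iff.rfl
    · refine ⟨fun hu => hU _ hu, fun hv => ?_⟩
      have := hU _ hv
      rwa [hatU_invol hθ] at this
    · refine ⟨fun hu => hD _ hu, fun hv => ?_⟩
      have := hD _ hv
      rwa [hatD_invol hφ] at this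
  | refl x => exact Iff.rfl
  | symm _ ih => exact ih.symm
  | trans _ _ ih1 ih2 => exact ih1.trans ih2

lemma traj_sync {j₁ j₂ : ℕ} (h : traj s t p j₁ = traj s t p j₂) (hpar : j₁ % 2 = j₂ % 2) :
    ∀ d, traj s t p (j₁ + d) = traj s t p (j₂ + d) := by
  intro d
  induction d with
  | zero => exact h
  | succ d ih =>
    rw [show j₁+(d+1) = (j₁+d)+1 from rfl, show j₂+(d+1) = (j₂+d)+1 from rfl,
      traj_succ, traj_succ, ih]
    by_cases h2 : (j₁+d) % 2 = 0
    · rw [if_pos h2, if_pos (by omega)]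
    · rw [if_neg h2, if_neg (by omega)]

lemma traj_reflect (hs : Involutive s) (ht : Involutive t) {k : ℕ}
    (hfold : traj s t p (k+1) = traj s t p k) :
    ∀ m, m ≤ k → traj s t p (k+1+m) = traj s t p (k-m) := by
  intro m
  induction m with
  | zero => simpa using hfold
  | succ m ih =>
    intro hm
    have ihm := ih (by omega)
    rw [show k+1+(m+1) = (k+1+m)+1 from rfl, traj_succ, ihm,
      show k-m = (k-(m+1))+1 by omega, traj_succ]
    by_cases h2 : (k+1+m) % 2 = 0
    · rw [if_pos h2, if_pos (by omega)]
      exact hs _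
    · rw [if_neg h2, if_neg (by omega)]
      exact ht _

lemma traj_range_of_fold (hs : Involutive s) (ht : Involutive t) (htp : t p = p) {k : ℕ}
    (hfold : traj s t p (k+1) = traj s t p k) :
    ∀ j, ∃ i, i ≤ k ∧ traj s t p j = traj s t p i := by
  have h1 : traj s t p (2*k+1) = p := by
    have := traj_reflect hs ht hfold k le_rfl
    rw [show k+1+k = 2*k+1 by omega, Nat.sub_self] at this
    simpa using this
  have h2 : traj s t p (2*k+2) = p := by
    rw [show 2*k+2 = (2*k+1)+1 from rfl, traj_succ, if_neg (by omega), h1, htp]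
  have hper : ∀ d, traj s t p (2*k+2+d) = traj s t p d := by
    have := traj_sync (j₁ := 2*k+2) (j₂ := 0) (by simpa using h2) (by omega)
    simpa using this
  intro j
  induction j using Nat.strong_induction_on with
  | _ j ih =>
    by_cases hj : j ≤ k
    · exact ⟨j, hj, rfl⟩
    · by_cases hj2 : j ≤ 2*k+1
      · have hm : j - (k+1) ≤ k := by omega
        have hr := traj_reflect hs ht hfold (j-(k+1)) hm
        rw [show k+1+(j-(k+1)) = j by omega] at hr
        exact ⟨k - (j-(k+1)), by omega, hr⟩
      · obtain ⟨i, hi, hti⟩ := ih (j - (2*k+2)) (by omega)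
        have hj3 := hper (j - (2*k+2))
        rw [show 2*k+2 + (j - (2*k+2)) = j by omega] at hj3
        exact ⟨i, hi, hj3.trans hti⟩

lemma fold_of_fixed (hs : Involutive s) (ht : Involutive t) {j : ℕ} (hj : 1 ≤ j)
    (hfix : s (traj s t p j) = traj s t p j ∨ t (traj s t p j) = traj s t p j) :
    (traj s t p (j+1) = traj s t p j) ∨ (traj s t p j = traj s t p (j-1)) := by
  obtain ⟨m, rfl⟩ : ∃ m, j = m+1 := ⟨j-1, by omega⟩
  rcases hfix with hfix | hfix
  · by_cases h2 : (m+1) % 2 = 0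
    · left; rw [traj_succ, if_pos h2, hfix]
    · right
      have hstep : traj s t p (m+1) = s (traj s t p m) := by
        rw [traj_succ, if_pos (by omega)]
      have : traj s t p (m+1) = traj s t p m := by
        calc traj s t p (m+1) = s (traj s t p (m+1)) := hfix.symm
          _ = s (s (traj s t p m)) := by rw [← hstep]
          _ = traj s t p m := hs _
      simpa using this
  · by_cases h2 : (m+1) % 2 = 0
    · right
      have hstep : traj s t p (m+1) = t (traj s t p m) := by
        rw [traj_succ, if_neg (by omega)]
      have : traj s t p (m+1) = traj s t p m := by
        calc traj s t p (m+1) = t (traj s t p (m+1)) := hfix.symm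
          _ = t (t (traj s t p m)) := by rw [← hstep]
          _ = traj s t p m := ht _
      simpa using this
    · left; rw [traj_succ, if_neg h2, hfix]

lemma boundary_unique (hs : Involutive s) (ht : Involutive t) (htp : t p = p)
    (hbd : ∀ z : PBV n, s (topBot z) = topBot z ∨ t (topBot z) = topBot z)
    {v w : PBV n} (hv : topBot v ∈ Set.range (traj s t p))
    (hw : topBot w ∈ Set.range (traj s t p))
    (hvp : topBot v ≠ p) (hwp : topBot w ≠ p) : v = w := by
  classical
  obtain ⟨jv, hjv⟩ := hv
  have hjv1 : 1 ≤ jv := by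
    rcases Nat.eq_zero_or_pos jv with rfl | h
    · exact absurd hjv.symm hvp
    · exact h
  have hfoldE : ∃ k, traj s t p (k+1) = traj s t p k := by
    rcases fold_of_fixed hs ht hjv1 (by rw [hjv]; exact hbd v) with h | h
    · exact ⟨jv, h⟩
    · exact ⟨jv - 1, by rw [show jv-1+1 = jv by omega]; exact h⟩
  set k := Nat.find hfoldE with hkdef
  have hk : traj s t p (k+1) = traj s t p k := Nat.find_spec hfoldE
  have hmin : ∀ i, i < k → ¬ traj s t p (i+1) = traj s t p i := fun i hi => Nat.find_min hfoldE hi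
  have key : ∀ (z : PBV n) (j : ℕ), traj s t p j = topBot z → topBot z ≠ p →
      topBot z = traj s t p k := by
    intro z j hj hzp
    obtain ⟨i, hik, hi⟩ := traj_range_of_fold hs ht htp hk j
    have hi' : traj s t p i = topBot z := by rw [← hi, hj]
    have hi1 : 1 ≤ i := by
      rcases Nat.eq_zero_or_pos i with rfl | h
      · exact absurd hi'.symm hzp
      · exact h
    rcases fold_of_fixed hs ht hi1 (by rw [hi']; exact hbd z) with h | h
    · have : i = k := by
        by_contra hc
        exact hmin i (by omega) h
      rw [← hi', this]
    · exfalso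
      refine hmin (i-1) (by omega) ?_
      rw [show i-1+1 = i by omega]
      exact h
  obtain ⟨jw, hjw⟩ := hw
  exact topBot_injective ((key v jv hjv hvp).trans (key w jw hjw hwp).symm)

/-! ### Orientation depending on the row of the base point -/

def sOf (θ φ : PBV n → PBV n) (x : PBV n) : V3 n → V3 n :=
  match x with
  | Sum.inl _ => hatU θ
  | Sum.inr _ => hatD φ

def tOf (θ φ : PBV n → PBV n) (x : PBV n) : V3 n → V3 n :=
  match x with
  | Sum.inl _ => hatD φ
  | Sum.inr _ => hatU θ

lemma sOf_invol {θ φ : PBV n → PBV n} (hθ : Involutive θ) (hφ : Involutive φ) (x : PBV n) :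
    Involutive (sOf θ φ x) := by
  cases x
  · exact hatU_invol hθ
  · exact hatD_invol hφ

lemma tOf_invol {θ φ : PBV n → PBV n} (hθ : Involutive θ) (hφ : Involutive φ) (x : PBV n) :
    Involutive (tOf θ φ x) := by
  cases x
  · exact hatD_invol hφ
  · exact hatU_invol hθ

lemma tOf_fix (θ φ : PBV n → PBV n) (x : PBV n) : tOf θ φ x (topBot x) = topBot x := by
  cases x <;> rfl

lemma bd_Of (θ φ : PBV n → PBV n) (x : PBV n) (z : PBV n) :
    sOf θ φ x (topBot z) = topBot z ∨ tOf θ φ x (topBot z) = topBot z := by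
  cases x <;> cases z <;> simp [sOf, tOf]

lemma rgen_to_range {θ φ : PBV n → PBV n} (hθ : Involutive θ) (hφ : Involutive φ)
    (x : PBV n) {q : V3 n}
    (h : RGen (prodEdges (DgmOf θ) (DgmOf φ)) (topBot x) q) :
    q ∈ Set.range (traj (sOf θ φ x) (tOf θ φ x) (topBot x)) := by
  have hU : ∀ u ∈ Set.range (traj (sOf θ φ x) (tOf θ φ x) (topBot x)),
      hatU θ u ∈ Set.range (traj (sOf θ φ x) (tOf θ φ x) (topBot x)) := by
    rintro u ⟨k, rfl⟩
    cases x
    · exact s_traj_mem (sOf_invol hθ hφ _) k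
    · exact t_traj_mem (tOf_invol hθ hφ _) (tOf_fix θ φ _) k
  have hD : ∀ u ∈ Set.range (traj (sOf θ φ x) (tOf θ φ x) (topBot x)),
      hatD φ u ∈ Set.range (traj (sOf θ φ x) (tOf θ φ x) (topBot x)) := by
    rintro u ⟨k, rfl⟩
    cases x
    · exact t_traj_mem (tOf_invol hθ hφ _) (tOf_fix θ φ _) k
    · exact s_traj_mem (sOf_invol hθ hφ _) k
  exact (rgen_mem hθ hφ hU hD h).mp ⟨0, rfl⟩

lemma partner_unique {θ φ : PBV n → PBV n} (hθ : Involutive θ) (hφ : Involutive φ)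
    {x v w : PBV n}
    (hv : RGen (prodEdges (DgmOf θ) (DgmOf φ)) (topBot x) (topBot v))
    (hw : RGen (prodEdges (DgmOf θ) (DgmOf φ)) (topBot x) (topBot w))
    (hvx : v ≠ x) (hwx : w ≠ x) : v = w := by
  refine boundary_unique (sOf_invol hθ hφ x) (tOf_invol hθ hφ x) (tOf_fix θ φ x)
    (bd_Of θ φ x) (rgen_to_range hθ hφ x hv) (rgen_to_range hθ hφ x hw) ?_ ?_
  · exact fun hc => hvx (topBot_injective hc)
  · exact fun hc => hwx (topBot_injective hc)

lemma sing_of_fold {θ φ : PBV n → PBV n} (hθ : Involutive θ) (hφ : Involutive φ)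
    (x : PBV n) (k : ℕ)
    (hfold : traj (sOf θ φ x) (tOf θ φ x) (topBot x) (k+1)
           = traj (sOf θ φ x) (tOf θ φ x) (topBot x) k)
    (hscan : ∀ i, i ≤ k → ∀ z : PBV n,
      traj (sOf θ φ x) (tOf θ φ x) (topBot x) i = topBot z → z = x) :
    ∀ y, RGen (prodEdges (DgmOf θ) (DgmOf φ)) (topBot x) (topBot y) → y = x := by
  intro y hy
  obtain ⟨j, hj⟩ := rgen_to_range hθ hφ x hy
  obtain ⟨i, hik, hi⟩ := traj_range_of_fold (sOf_invol hθ hφ x) (tOf_invol hθ hφ x)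
    (tOf_fix θ φ x) hfold j
  exact hscan i hik y (by rw [← hi, hj])

lemma instance_master {θ φ ψ : PBV n → PBV n} (hθ : Involutive θ) (hφ : Involutive φ)
    (hψ : Involutive ψ)
    (hpath : ∀ x : PBV n, ψ x ≠ x →
      RGen (prodEdges (DgmOf θ) (DgmOf φ)) (topBot x) (topBot (ψ x)))
    (hsing : ∀ x : PBV n, ψ x = x →
      ∀ y, RGen (prodEdges (DgmOf θ) (DgmOf φ)) (topBot x) (topBot y) → y = x) :
    pmul (DgmOf θ) (DgmOf φ) = DgmOf ψ := by
  apply Setoid.ext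
  intro x y
  constructor
  · intro h
    have h' : RGen (prodEdges (DgmOf θ) (DgmOf φ)) (topBot x) (topBot y) := h
    rw [show ((DgmOf ψ) x y) = (DgmOf ψ).r x y from rfl, dgmOf_r_invol hψ]
    by_cases hxy : x = y
    · exact Or.inl hxy
    by_cases hx : ψ x = x
    · exact absurd (hsing x hx y h') (fun hc => hxy hc.symm)
    · exact Or.inr (partner_unique hθ hφ h' (hpath x hx)
        (fun hc => hxy hc.symm) hx).symm
  · intro h
    have h' := (dgmOf_r_invol hψ x y).mp h
    show RGen (prodEdges (DgmOf θ) (DgmOf φ)) (topBot x) (topBot y)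
    rcases h' with rfl | h'
    · exact RGen.refl _
    · by_cases hx : ψ x = x
      · rw [hx] at h'; subst h'; exact RGen.refl _
      · have := hpath x hx
        rwa [h'] at this

end PBWork

namespace PBWork
open Dgm Function

variable {n : ℕ}

/-! ### The family of concrete diagrams -/

/-- Involution data: top hooks `μt`, bottom hooks `μb`, transversals `{i, (φ i)'}`
for `i ∈ A`. -/
def Fθ (μt μb : Fin n → Fin n) (φ : Equiv.Perm (Fin n)) (A : Set (Fin n)) :
    PBV n → PBV n
  | Sum.inl i => if i ∈ A then Sum.inr (φ i) else Sum.inl (μt i)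
  | Sum.inr j => if j ∈ ⇑φ '' A then Sum.inl (φ.symm j) else Sum.inr (μb j)

lemma Fθ_inl_mem {μt μb : Fin n → Fin n} {φ : Equiv.Perm (Fin n)} {A : Set (Fin n)}
    {i : Fin n} (h : i ∈ A) : Fθ μt μb φ A (Sum.inl i) = Sum.inr (φ i) := if_pos h

lemma Fθ_inl_not {μt μb : Fin n → Fin n} {φ : Equiv.Perm (Fin n)} {A : Set (Fin n)}
    {i : Fin n} (h : i ∉ A) : Fθ μt μb φ A (Sum.inl i) = Sum.inl (μt i) := if_neg h

lemma Fθ_inr_mem {μt μb : Fin n → Fin n} {φ : Equiv.Perm (Fin n)} {A : Set (Fin n)}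
    {j : Fin n} (h : j ∈ ⇑φ '' A) : Fθ μt μb φ A (Sum.inr j) = Sum.inl (φ.symm j) := if_pos h

lemma Fθ_inr_not {μt μb : Fin n → Fin n} {φ : Equiv.Perm (Fin n)} {A : Set (Fin n)}
    {j : Fin n} (h : j ∉ ⇑φ '' A) : Fθ μt μb φ A (Sum.inr j) = Sum.inr (μb j) := if_neg h

/-- Well-formedness of the data. -/
structure FWF (μt μb : Fin n → Fin n) (φ : Equiv.Perm (Fin n)) (A : Set (Fin n)) : Prop where
  ht : Involutive μt
  hb : Involutive μb
  hAt : ∀ i ∈ A, μt i = i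
  hAb : ∀ j ∈ ⇑φ '' A, μb j = j

lemma FWF.not_mem_t {μt μb : Fin n → Fin n} {φ : Equiv.Perm (Fin n)} {A : Set (Fin n)}
    (h : FWF μt μb φ A) {i : Fin n} (hi : μt i ≠ i) : i ∉ A :=
  fun hc => hi (h.hAt i hc)

lemma FWF.not_mem_b {μt μb : Fin n → Fin n} {φ : Equiv.Perm (Fin n)} {A : Set (Fin n)}
    (h : FWF μt μb φ A) {j : Fin n} (hj : μb j ≠ j) : j ∉ ⇑φ '' A :=
  fun hc => hj (h.hAb j hc)

lemma FWF.image_not_mem_t {μt μb : Fin n → Fin n} {φ : Equiv.Perm (Fin n)} {A : Set (Fin n)}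
    (h : FWF μt μb φ A) {i : Fin n} (hi : i ∉ A) (hne : μt i ≠ i) : μt i ∉ A := by
  intro hc
  have := h.hAt (μt i) hc
  rw [h.ht] at this
  exact hne this.symm

lemma Fθ_invol {μt μb : Fin n → Fin n} {φ : Equiv.Perm (Fin n)} {A : Set (Fin n)}
    (h : FWF μt μb φ A) : Involutive (Fθ μt μb φ A) := by
  rintro (i | j)
  · by_cases hi : i ∈ A
    · rw [Fθ_inl_mem hi, Fθ_inr_mem (Set.mem_image_of_mem _ hi)]
      simp
    · rw [Fθ_inl_not hi]
      by_cases hne : μt i = i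
      · rw [hne, Fθ_inl_not hi, hne]
      · rw [Fθ_inl_not (h.image_not_mem_t hi hne), h.ht]
  · by_cases hj : j ∈ ⇑φ '' A
    · obtain ⟨a, ha, rfl⟩ := hj
      rw [Fθ_inr_mem (Set.mem_image_of_mem _ ha)]
      simp [Fθ_inl_mem ha]
    · rw [Fθ_inr_not hj]
      by_cases hne : μb j = j
      · rw [hne, Fθ_inr_not hj, hne]
      · have hnb : μb j ∉ ⇑φ '' A := by
          intro hc
          have := h.hAb (μb j) hc
          rw [h.hb] at this
          exact hne this.symm
        rw [Fθ_inr_not hnb, h.hb]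

/-- The corresponding diagram. -/
def FD (μt μb : Fin n → Fin n) (φ : Equiv.Perm (Fin n)) (A : Set (Fin n)) : Dgm n :=
  DgmOf (Fθ μt μb φ A)

lemma FD_isPB (μt μb : Fin n → Fin n) (φ : Equiv.Perm (Fin n)) (A : Set (Fin n)) :
    FD μt μb φ A ∈ PBset n := isPB_dgmOf _

lemma domSet_FD {μt μb : Fin n → Fin n} {φ : Equiv.Perm (Fin n)} {A : Set (Fin n)}
    (h : FWF μt μb φ A) : domSet (FD μt μb φ A) = A := by
  ext i
  simp only [domSet, Set.mem_setOf_eq]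
  constructor
  · rintro ⟨j, hj⟩
    rw [show (FD μt μb φ A) (Sum.inl i) (Sum.inr j) = (FD μt μb φ A).r (Sum.inl i) (Sum.inr j) from rfl,
      FD, dgmOf_r_invol (Fθ_invol h)] at hj
    rcases hj with hj | hj
    · simp at hj
    · by_cases hi : i ∈ A
      · exact hi
      · rw [Fθ_inl_not hi] at hj
        simp at hj
  · intro hi
    refine ⟨φ i, ?_⟩
    rw [show (FD μt μb φ A) (Sum.inl i) (Sum.inr (φ i)) = (FD μt μb φ A).r (Sum.inl i) (Sum.inr (φ i)) from rfl,
      FD, dgmOf_r_invol (Fθ_invol h)]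
    exact Or.inr (Fθ_inl_mem hi)

lemma prank_FD {μt μb : Fin n → Fin n} {φ : Equiv.Perm (Fin n)} {A : Set (Fin n)}
    (h : FWF μt μb φ A) : prank (FD μt μb φ A) = A.ncard := by
  rw [prank, domSet_FD h]

/-! ### Step helpers for explicit paths -/

section Steps
variable {θ φ : PBV n → PBV n}

lemma stepU_tt (hθ : Involutive θ) {i k : Fin n} (h : θ (Sum.inl i) = Sum.inl k) :
    RGen (prodEdges (DgmOf θ) (DgmOf φ)) (Sum.inl i) (Sum.inl k) := by
  have := rgen_hatU (θ := θ) (φ := φ) hθ (Sum.inl i)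
  rwa [h] at this

lemma stepU_tm (hθ : Involutive θ) {i m : Fin n} (h : θ (Sum.inl i) = Sum.inr m) :
    RGen (prodEdges (DgmOf θ) (DgmOf φ)) (Sum.inl i) (Sum.inr (Sum.inl m)) := by
  have := rgen_hatU (θ := θ) (φ := φ) hθ (Sum.inl i)
  rwa [h] at this

lemma stepU_mt (hθ : Involutive θ) {m k : Fin n} (h : θ (Sum.inr m) = Sum.inl k) :
    RGen (prodEdges (DgmOf θ) (DgmOf φ)) (Sum.inr (Sum.inl m)) (Sum.inl k) := by
  have := rgen_hatU (θ := θ) (φ := φ) hθ (Sum.inr m)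
  rwa [h] at this

lemma stepU_mm (hθ : Involutive θ) {m k : Fin n} (h : θ (Sum.inr m) = Sum.inr k) :
    RGen (prodEdges (DgmOf θ) (DgmOf φ)) (Sum.inr (Sum.inl m)) (Sum.inr (Sum.inl k)) := by
  have := rgen_hatU (θ := θ) (φ := φ) hθ (Sum.inr m)
  rwa [h] at this

lemma stepD_mb (hφ : Involutive φ) {m j : Fin n} (h : φ (Sum.inl m) = Sum.inr j) :
    RGen (prodEdges (DgmOf θ) (DgmOf φ)) (Sum.inr (Sum.inl m)) (Sum.inr (Sum.inr j)) := by
  have := rgen_hatD (θ := θ) (φ := φ) hφ (Sum.inl m)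
  rwa [h] at this

lemma stepD_mm (hφ : Involutive φ) {m k : Fin n} (h : φ (Sum.inl m) = Sum.inl k) :
    RGen (prodEdges (DgmOf θ) (DgmOf φ)) (Sum.inr (Sum.inl m)) (Sum.inr (Sum.inl k)) := by
  have := rgen_hatD (θ := θ) (φ := φ) hφ (Sum.inl m)
  rwa [h] at this

lemma stepD_bm (hφ : Involutive φ) {j m : Fin n} (h : φ (Sum.inr j) = Sum.inl m) :
    RGen (prodEdges (DgmOf θ) (DgmOf φ)) (Sum.inr (Sum.inr j)) (Sum.inr (Sum.inl m)) := by
  have := rgen_hatD (θ := θ) (φ := φ) hφ (Sum.inr j)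
  rwa [h] at this

lemma stepD_bb (hφ : Involutive φ) {j k : Fin n} (h : φ (Sum.inr j) = Sum.inr k) :
    RGen (prodEdges (DgmOf θ) (DgmOf φ)) (Sum.inr (Sum.inr j)) (Sum.inr (Sum.inr k)) := by
  have := rgen_hatD (θ := θ) (φ := φ) hφ (Sum.inr j)
  rwa [h] at this

end Steps

/-! ### Singleton-block helpers -/

@[simp] lemma sOf_inl (θ φ : PBV n → PBV n) (i : Fin n) : sOf θ φ (Sum.inl i) = hatU θ := rfl
@[simp] lemma sOf_inr (θ φ : PBV n → PBV n) (j : Fin n) : sOf θ φ (Sum.inr j) = hatD φ := rfl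
@[simp] lemma tOf_inl (θ φ : PBV n → PBV n) (i : Fin n) : tOf θ φ (Sum.inl i) = hatD φ := rfl
@[simp] lemma tOf_inr (θ φ : PBV n → PBV n) (j : Fin n) : tOf θ φ (Sum.inr j) = hatU θ := rfl
@[simp] lemma hatU_top (θ : PBV n → PBV n) (i : Fin n) :
    hatU θ (Sum.inl i) = topMid (θ (Sum.inl i)) := rfl
@[simp] lemma hatU_mid (θ : PBV n → PBV n) (m : Fin n) :
    hatU θ (Sum.inr (Sum.inl m)) = topMid (θ (Sum.inr m)) := rfl
@[simp] lemma hatD_mid (φ : PBV n → PBV n) (m : Fin n) :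
    hatD φ (Sum.inr (Sum.inl m)) = midBot (φ (Sum.inl m)) := rfl
@[simp] lemma hatD_bot2 (φ : PBV n → PBV n) (j : Fin n) :
    hatD φ (Sum.inr (Sum.inr j)) = midBot (φ (Sum.inr j)) := rfl

lemma topBot_eq_top {z : PBV n} {i : Fin n} (h : (Sum.inl i : V3 n) = topBot z) :
    z = Sum.inl i := by cases z <;> simp_all

lemma topBot_eq_bot {z : PBV n} {j : Fin n} (h : (Sum.inr (Sum.inr j) : V3 n) = topBot z) :
    z = Sum.inr j := by cases z <;> simp_all

lemma topBot_ne_mid {z : PBV n} {m : Fin n} (h : (Sum.inr (Sum.inl m) : V3 n) = topBot z) :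
    False := by cases z <;> simp_all

section Sing
variable {θ φ : PBV n → PBV n}

lemma sing0_top (hθ : Involutive θ) (hφ : Involutive φ) {i : Fin n}
    (h : θ (Sum.inl i) = Sum.inl i) :
    ∀ y, RGen (prodEdges (DgmOf θ) (DgmOf φ)) (topBot (Sum.inl i)) (topBot y) →
      y = Sum.inl i := by
  apply sing_of_fold hθ hφ (Sum.inl i) 0
  · show traj _ _ _ 1 = traj _ _ _ 0
    simp [traj_succ, h]
  · intro i' hi' z hz
    interval_cases i'
    simp only [traj_zero, topBot_inl] at hz
    exact topBot_eq_top hz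

lemma sing1_top (hθ : Involutive θ) (hφ : Involutive φ) {i m : Fin n}
    (h1 : θ (Sum.inl i) = Sum.inr m) (h2 : φ (Sum.inl m) = Sum.inl m) :
    ∀ y, RGen (prodEdges (DgmOf θ) (DgmOf φ)) (topBot (Sum.inl i)) (topBot y) →
      y = Sum.inl i := by
  have e1 : traj (sOf θ φ (Sum.inl i)) (tOf θ φ (Sum.inl i)) (topBot (Sum.inl i)) 1
      = Sum.inr (Sum.inl m) := by
    simp [traj_succ, h1]
  apply sing_of_fold hθ hφ (Sum.inl i) 1
  · show traj _ _ _ 2 = traj _ _ _ 1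
    rw [show (2:ℕ) = 1+1 from rfl, traj_succ, e1]
    simp [h2]
  · intro i' hi' z hz
    interval_cases i'
    · simp only [traj_zero, topBot_inl] at hz
      exact topBot_eq_top hz
    · rw [e1] at hz
      exact (topBot_ne_mid hz).elim
      
lemma sing0_bot (hθ : Involutive θ) (hφ : Involutive φ) {j : Fin n}
    (h : φ (Sum.inr j) = Sum.inr j) :
    ∀ y, RGen (prodEdges (DgmOf θ) (DgmOf φ)) (topBot (Sum.inr j)) (topBot y) →
      y = Sum.inr j := by
  apply sing_of_fold hθ hφ (Sum.inr j) 0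
  · show traj _ _ _ 1 = traj _ _ _ 0
    simp [traj_succ, h]
  · intro i' hi' z hz
    interval_cases i'
    simp only [traj_zero, topBot_inr] at hz
    exact topBot_eq_bot hz

lemma sing1_bot (hθ : Involutive θ) (hφ : Involutive φ) {j m : Fin n}
    (h1 : φ (Sum.inr j) = Sum.inl m) (h2 : θ (Sum.inr m) = Sum.inr m) :
    ∀ y, RGen (prodEdges (DgmOf θ) (DgmOf φ)) (topBot (Sum.inr j)) (topBot y) →
      y = Sum.inr j := by
  have e1 : traj (sOf θ φ (Sum.inr j)) (tOf θ φ (Sum.inr j)) (topBot (Sum.inr j)) 1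
      = Sum.inr (Sum.inl m) := by
    simp [traj_succ, h1]
  apply sing_of_fold hθ hφ (Sum.inr j) 1
  · show traj _ _ _ 2 = traj _ _ _ 1
    rw [show (2:ℕ) = 1+1 from rfl, traj_succ, e1]
    simp [h2]
  · intro i' hi' z hz
    interval_cases i'
    · simp only [traj_zero, topBot_inr] at hz
      exact topBot_eq_bot hz
    · rw [e1] at hz
      exact (topBot_ne_mid hz).elim

end Sing

end PBWork

namespace PBWork
open Dgm Function

variable {n : ℕ}

lemma one_image (C : Set (Fin n)) : ⇑(1 : Equiv.Perm (Fin n)) '' C = C := by simp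

section Instances
variable {ν μt μb : Fin n → Fin n} {φ : Equiv.Perm (Fin n)} {A C : Set (Fin n)}

lemma FWF_P (hν : Involutive ν) (hC : ∀ i ∈ C, ν i = i) : FWF ν ν 1 C :=
  ⟨hν, hν, hC, by intro j hj; rw [one_image] at hj; exact hC j hj⟩

/-- Left sandwich: a projection absorbed into the top of a diagram. -/
lemma sandL (hν : Involutive ν) (hwf : FWF μt μb φ A)
    (hC : ∀ i ∈ C, ν i = i)
    (hmt : ∀ i, μt i ≠ i → (i ∉ C ∧ ν i = i))
    (hνA : ∀ i, ν i ≠ i → i ∉ A) :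
    pmul (FD ν ν 1 C) (FD μt μb φ A) = FD ν μb φ (C ∩ A) := by
  have hwf1 : FWF ν ν 1 C := FWF_P hν hC
  have hwfr : FWF ν μb φ (C ∩ A) :=
    ⟨hν, hwf.hb, fun i hi => hC i hi.1,
      fun j hj => hwf.hAb j (Set.image_mono Set.inter_subset_right hj)⟩
  have hθ1 := Fθ_invol hwf1
  have hθ2 := Fθ_invol hwf
  apply instance_master hθ1 hθ2 (Fθ_invol hwfr)
  · -- paths
    rintro (i | j) hx
    · by_cases hiCA : i ∈ C ∩ A
      · rw [Fθ_inl_mem hiCA]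
        exact RGen.trans (stepU_tm hθ1 (by rw [Fθ_inl_mem hiCA.1]; rfl))
          (stepD_mb hθ2 (Fθ_inl_mem hiCA.2))
      · rw [Fθ_inl_not hiCA] at hx ⊢
        have hνi : ν i ≠ i := fun hc => hx (by rw [hc])
        have hiC : i ∉ C := fun hc => hνi (hC i hc)
        exact stepU_tt hθ1 (by rw [Fθ_inl_not hiC])
    · by_cases hj : j ∈ ⇑φ '' (C ∩ A)
      · rw [Fθ_inr_mem hj]
        have hjA : j ∈ ⇑φ '' A := Set.image_mono Set.inter_subset_right hj
        have hsymmC : φ.symm j ∈ C := by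
          obtain ⟨a, ha, rfl⟩ := hj; simpa using ha.1
        exact RGen.trans (stepD_bm hθ2 (Fθ_inr_mem hjA))
          (stepU_mt hθ1 (by rw [Fθ_inr_mem (by rw [one_image]; exact hsymmC)]; rfl))
      · rw [Fθ_inr_not hj] at hx ⊢
        have hμb : μb j ≠ j := fun hc => hx (by rw [hc])
        have hjA : j ∉ ⇑φ '' A := hwf.not_mem_b hμb
        exact stepD_bb hθ2 (by rw [Fθ_inr_not hjA])
  · -- singletons
    rintro (i | j) hx
    · have hiCA : i ∉ C ∩ A := by
        intro hc; rw [Fθ_inl_mem hc] at hx; simp at hx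
      rw [Fθ_inl_not hiCA] at hx
      have hνi : ν i = i := by injection hx
      by_cases hiC : i ∈ C
      · have hiA : i ∉ A := fun hc => hiCA ⟨hiC, hc⟩
        have hμt : μt i = i := by
          by_contra hne
          exact (hmt i hne).1 hiC
        exact sing1_top hθ1 hθ2 (m := i) (by rw [Fθ_inl_mem hiC]; rfl)
          (by rw [Fθ_inl_not hiA, hμt])
      · exact sing0_top hθ1 hθ2 (by rw [Fθ_inl_not hiC, hνi])
    · have hjCA : j ∉ ⇑φ '' (C ∩ A) := by
        intro hc; rw [Fθ_inr_mem hc] at hx; simp at hx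
      rw [Fθ_inr_not hjCA] at hx
      have hμb : μb j = j := by injection hx
      by_cases hjA : j ∈ ⇑φ '' A
      · have hmA : φ.symm j ∈ A := by
          obtain ⟨a, ha, rfl⟩ := hjA; simpa using ha
        have hmC : φ.symm j ∉ C := by
          intro hc
          exact hjCA ⟨φ.symm j, ⟨hc, hmA⟩, by simp⟩
        have hνm : ν (φ.symm j) = φ.symm j := by
          by_contra hne
          exact hνA _ hne hmA
        exact sing1_bot hθ1 hθ2 (Fθ_inr_mem hjA)
          (by rw [Fθ_inr_not (by rw [one_image]; exact hmC), hνm])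
      · exact sing0_bot hθ1 hθ2 (by rw [Fθ_inr_not hjA, hμb])

/-- Right sandwich: a projection absorbed into the bottom of a diagram. -/
lemma sandR (hν : Involutive ν) (hwf : FWF μt μb φ A)
    (hC : ∀ i ∈ C, ν i = i)
    (hmb : ∀ j, μb j ≠ j → (j ∉ C ∧ ν j = j))
    (hνA : ∀ j, ν j ≠ j → j ∉ ⇑φ '' A) :
    pmul (FD μt μb φ A) (FD ν ν 1 C) = FD μt ν φ (A ∩ ⇑φ ⁻¹' C) := by
  have hwf1 : FWF ν ν 1 C := FWF_P hν hC
  have hAb' : ∀ j ∈ ⇑φ '' (A ∩ ⇑φ ⁻¹' C), ν j = j := by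
    rintro j ⟨a, ha, rfl⟩
    exact hC _ ha.2
  have hwfr : FWF μt ν φ (A ∩ ⇑φ ⁻¹' C) :=
    ⟨hwf.ht, hν, fun i hi => hwf.hAt i hi.1, hAb'⟩
  have hθ1 := Fθ_invol hwf
  have hθ2 := Fθ_invol hwf1
  have himg : ⇑φ '' (A ∩ ⇑φ ⁻¹' C) = ⇑φ '' A ∩ C := by
    rw [Set.image_inter φ.injective, Set.image_preimage_eq _ φ.surjective]
  apply instance_master hθ1 hθ2 (Fθ_invol hwfr)
  · rintro (i | j) hx
    · by_cases hiA : i ∈ A ∩ ⇑φ ⁻¹' C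
      · rw [Fθ_inl_mem hiA]
        refine RGen.trans (stepU_tm hθ1 (Fθ_inl_mem hiA.1)) (stepD_mb hθ2 ?_)
        have : φ i ∈ C := hiA.2
        rw [Fθ_inl_mem this]
        rfl
      · rw [Fθ_inl_not hiA] at hx ⊢
        have hμt : μt i ≠ i := fun hc => hx (by rw [hc])
        have hA : i ∉ A := hwf.not_mem_t hμt
        exact stepU_tt hθ1 (by rw [Fθ_inl_not hA])
    · by_cases hj : j ∈ ⇑φ '' (A ∩ ⇑φ ⁻¹' C)
      · rw [Fθ_inr_mem hj]
        rw [himg] at hj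
        exact RGen.trans (stepD_bm hθ2 (by
          rw [Fθ_inr_mem (by rw [one_image]; exact hj.2)]; rfl))
          (stepU_mt hθ1 (Fθ_inr_mem hj.1))
      · rw [Fθ_inr_not hj] at hx ⊢
        have hν' : ν j ≠ j := fun hc => hx (by rw [hc])
        have hjC : j ∉ C := fun hc => hν' (hC j hc)
        exact stepD_bb hθ2 (by rw [Fθ_inr_not (by rw [one_image]; exact hjC)])
  · rintro (i | j) hx
    · have hiA : i ∉ A ∩ ⇑φ ⁻¹' C := by
        intro hc; rw [Fθ_inl_mem hc] at hx; simp at hx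
      rw [Fθ_inl_not hiA] at hx
      have hμt : μt i = i := by injection hx
      by_cases hA : i ∈ A
      · have hφC : φ i ∉ C := fun hc => hiA ⟨hA, hc⟩
        have hνφ : ν (φ i) = φ i := by
          by_contra hne
          exact hνA _ hne (Set.mem_image_of_mem _ hA)
        exact sing1_top hθ1 hθ2 (Fθ_inl_mem hA)
          (by rw [Fθ_inl_not hφC, hνφ])
      · exact sing0_top hθ1 hθ2 (by rw [Fθ_inl_not hA, hμt])
    · have hjA : j ∉ ⇑φ '' (A ∩ ⇑φ ⁻¹' C) := by
        intro hc; rw [Fθ_inr_mem hc] at hx; simp at hx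
      rw [Fθ_inr_not hjA] at hx
      have hνj : ν j = j := by injection hx
      rw [himg] at hjA
      by_cases hjC : j ∈ C
      · have hjφA : j ∉ ⇑φ '' A := fun hc => hjA ⟨hc, hjC⟩
        have hμb : μb j = j := by
          by_contra hne
          exact (hmb j hne).1 hjC
        refine sing1_bot (m := j) hθ1 hθ2 ?_ (by rw [Fθ_inr_not hjφA, hμb])
        rw [Fθ_inr_mem (by rw [one_image]; exact hjC)]
        rfl
      · exact sing0_bot hθ1 hθ2 (by rw [Fθ_inr_not (by rw [one_image]; exact hjC), hνj])

end Instances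
end PBWork

namespace PBWork
open Dgm Function

variable {n : ℕ}

@[simp] lemma perm_one_apply (i : Fin n) : (1 : Equiv.Perm (Fin n)) i = i := rfl
@[simp] lemma perm_one_symm_apply (i : Fin n) :
    (1 : Equiv.Perm (Fin n)).symm i = i := rfl

section InstG
variable {ν₁ ν₂ : Fin n → Fin n} {C₁ C₂ : Set (Fin n)}

/-- The combined matching. -/
def combμ (ν₁ ν₂ : Fin n → Fin n) : Fin n → Fin n :=
  fun x => if ν₁ x = x then ν₂ x else ν₁ x

lemma combμ_eq₁ {x : Fin n} (h : ν₁ x ≠ x) : combμ ν₁ ν₂ x = ν₁ x := if_neg h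
lemma combμ_eq₂ {x : Fin n} (h : ν₁ x = x) : combμ ν₁ ν₂ x = ν₂ x := if_pos h

lemma combμ_invol (h1 : Involutive ν₁) (h2 : Involutive ν₂)
    (hC1 : ∀ i ∈ C₁, ν₁ i = i)
    (g2 : ∀ x, ν₂ x ≠ x → (ν₁ x = ν₂ x ∨ (x ∈ C₁ ∧ ν₂ x ∈ C₁))) :
    Involutive (combμ ν₁ ν₂) := by
  intro x
  by_cases hx1 : ν₁ x = x
  · rw [combμ_eq₂ hx1]
    by_cases hx2 : ν₂ x = x
    · rw [hx2, combμ_eq₂ hx1, hx2]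
    · have hz : ν₁ (ν₂ x) = ν₂ x := by
        by_contra hne
        rcases g2 x hx2 with h | h
        · rw [hx1] at h; exact hx2 h.symm
        · exact hne (hC1 _ h.2)
      rw [combμ_eq₂ hz, h2]
  · rw [combμ_eq₁ hx1]
    have hz : ν₁ (ν₁ x) ≠ ν₁ x := by
      rw [h1]; exact fun hc => hx1 hc.symm
    rw [combμ_eq₁ hz, h1]

/-- Product of two "projections". -/
lemma instG (h1 : Involutive ν₁) (h2 : Involutive ν₂)
    (hC1 : ∀ i ∈ C₁, ν₁ i = i) (hC2 : ∀ i ∈ C₂, ν₂ i = i)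
    (g1 : ∀ x, ν₁ x ≠ x → (ν₂ x = ν₁ x ∨ (x ∈ C₂ ∧ ν₁ x ∈ C₂)))
    (g2 : ∀ x, ν₂ x ≠ x → (ν₁ x = ν₂ x ∨ (x ∈ C₁ ∧ ν₂ x ∈ C₁))) :
    pmul (FD ν₁ ν₁ 1 C₁) (FD ν₂ ν₂ 1 C₂)
      = FD (combμ ν₁ ν₂) (combμ ν₁ ν₂) 1 (C₁ ∩ C₂) := by
  have hν' := combμ_invol h1 h2 hC1 g2
  have hwf1 : FWF ν₁ ν₁ 1 C₁ := FWF_P h1 hC1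
  have hwf2 : FWF ν₂ ν₂ 1 C₂ := FWF_P h2 hC2
  have hC' : ∀ i ∈ C₁ ∩ C₂, combμ ν₁ ν₂ i = i := by
    intro i hi
    rw [combμ_eq₂ (hC1 i hi.1)]
    exact hC2 i hi.2
  have hθ1 := Fθ_invol hwf1
  have hθ2 := Fθ_invol hwf2
  -- evaluation helpers
  have ev1t : ∀ i ∈ C₁, Fθ ν₁ ν₁ 1 C₁ (Sum.inl i) = Sum.inr i := by
    intro i hi; rw [Fθ_inl_mem hi]; rfl
  have ev2t : ∀ i ∈ C₂, Fθ ν₂ ν₂ 1 C₂ (Sum.inl i) = Sum.inr i := by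
    intro i hi; rw [Fθ_inl_mem hi]; rfl
  have ev1b : ∀ j ∈ C₁, Fθ ν₁ ν₁ 1 C₁ (Sum.inr j) = Sum.inl j := by
    intro j hj; rw [Fθ_inr_mem (by rw [one_image]; exact hj)]; rfl
  have ev2b : ∀ j ∈ C₂, Fθ ν₂ ν₂ 1 C₂ (Sum.inr j) = Sum.inl j := by
    intro j hj; rw [Fθ_inr_mem (by rw [one_image]; exact hj)]; rfl
  have ev1t' : ∀ i, i ∉ C₁ → Fθ ν₁ ν₁ 1 C₁ (Sum.inl i) = Sum.inl (ν₁ i) := by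
    intro i hi; rw [Fθ_inl_not hi]
  have ev2t' : ∀ i, i ∉ C₂ → Fθ ν₂ ν₂ 1 C₂ (Sum.inl i) = Sum.inl (ν₂ i) := by
    intro i hi; rw [Fθ_inl_not hi]
  have ev1b' : ∀ j, j ∉ C₁ → Fθ ν₁ ν₁ 1 C₁ (Sum.inr j) = Sum.inr (ν₁ j) := by
    intro j hj; rw [Fθ_inr_not (by rw [one_image]; exact hj)]
  have ev2b' : ∀ j, j ∉ C₂ → Fθ ν₂ ν₂ 1 C₂ (Sum.inr j) = Sum.inr (ν₂ j) := by
    intro j hj; rw [Fθ_inr_not (by rw [one_image]; exact hj)]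
  apply instance_master hθ1 hθ2 (Fθ_invol (FWF_P hν' hC'))
  · rintro (i | j) hx
    · by_cases hi12 : i ∈ C₁ ∩ C₂
      · rw [Fθ_inl_mem hi12]
        show RGen _ (topBot (Sum.inl i)) (topBot (Sum.inr i))
        exact RGen.trans (stepU_tm (m := i) hθ1 (ev1t i hi12.1))
          (stepD_mb (j := i) hθ2 (ev2t i hi12.2))
      · rw [Fθ_inl_not hi12] at hx ⊢
        have hν : combμ ν₁ ν₂ i ≠ i := fun hc => hx (by rw [hc])
        by_cases hν1 : ν₁ i = i
        · rw [combμ_eq₂ hν1] at hν ⊢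
          rcases g2 i hν with h | h
          · rw [hν1] at h; exact absurd h.symm hν
          · refine RGen.trans (stepU_tm (m := i) hθ1 (ev1t i h.1)) ?_
            refine RGen.trans (stepD_mm (k := ν₂ i) hθ2
              (ev2t' i (fun hc => hν (hC2 i hc)))) ?_
            exact stepU_mt (k := ν₂ i) hθ1 (ev1b (ν₂ i) h.2)
        · rw [combμ_eq₁ hν1]
          exact stepU_tt (k := ν₁ i) hθ1 (ev1t' i (fun hc => hν1 (hC1 i hc)))
    · by_cases hj12 : j ∈ ⇑(1 : Equiv.Perm (Fin n)) '' (C₁ ∩ C₂)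
      · rw [Fθ_inr_mem hj12]
        rw [one_image] at hj12
        show RGen _ (topBot (Sum.inr j)) (topBot (Sum.inl j))
        exact RGen.trans (stepD_bm (m := j) hθ2 (ev2b j hj12.2))
          (stepU_mt (k := j) hθ1 (ev1b j hj12.1))
      · rw [Fθ_inr_not hj12] at hx ⊢
        rw [one_image] at hj12
        have hν : combμ ν₁ ν₂ j ≠ j := fun hc => hx (by rw [hc])
        by_cases hν1 : ν₁ j = j
        · rw [combμ_eq₂ hν1] at hν ⊢
          exact stepD_bb (k := ν₂ j) hθ2 (ev2b' j (fun hc => hν (hC2 j hc)))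
        · rw [combμ_eq₁ hν1]
          have hjC1 : j ∉ C₁ := fun hc => hν1 (hC1 j hc)
          rcases g1 j hν1 with h | h
          · have hjC2 : j ∉ C₂ := fun hc => by
              rw [hC2 j hc] at h; exact hν1 h.symm
            have := ev2b' j hjC2
            rw [h] at this
            exact stepD_bb (k := ν₁ j) hθ2 this
          · refine RGen.trans (stepD_bm (m := j) hθ2 (ev2b j h.1)) ?_
            refine RGen.trans (stepU_mm (k := ν₁ j) hθ1 (ev1b' j hjC1)) ?_
            exact stepD_mb (j := ν₁ j) hθ2 (ev2t (ν₁ j) h.2)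
  · rintro (i | j) hx
    · have hi12 : i ∉ C₁ ∩ C₂ := by
        intro hc; rw [Fθ_inl_mem hc] at hx; simp at hx
      rw [Fθ_inl_not hi12] at hx
      have hx' : combμ ν₁ ν₂ i = i := by injection hx
      have hν1 : ν₁ i = i := by
        by_contra hne
        rw [combμ_eq₁ hne] at hx'
        exact hne hx'
      have hν2 : ν₂ i = i := by rw [combμ_eq₂ hν1] at hx'; exact hx'
      by_cases hiC1 : i ∈ C₁
      · refine sing1_top (m := i) hθ1 hθ2 (ev1t i hiC1) ?_
        rw [ev2t' i (fun hc => hi12 ⟨hiC1, hc⟩), hν2]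
      · exact sing0_top hθ1 hθ2 (by rw [ev1t' i hiC1, hν1])
    · have hj12 : j ∉ ⇑(1 : Equiv.Perm (Fin n)) '' (C₁ ∩ C₂) := by
        intro hc; rw [Fθ_inr_mem hc] at hx; simp at hx
      rw [Fθ_inr_not hj12] at hx
      rw [one_image] at hj12
      have hx' : combμ ν₁ ν₂ j = j := by injection hx
      have hν1 : ν₁ j = j := by
        by_contra hne
        rw [combμ_eq₁ hne] at hx'
        exact hne hx'
      have hν2 : ν₂ j = j := by rw [combμ_eq₂ hν1] at hx'; exact hx'
      by_cases hjC2 : j ∈ C₂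
      · refine sing1_bot (m := j) hθ1 hθ2 (ev2b j hjC2) ?_
        rw [ev1b' j (fun hc => hj12 ⟨hc, hjC2⟩), hν1]
      · exact sing0_bot hθ1 hθ2 (by rw [ev2b' j hjC2, hν2])

end InstG

section InstDelta
variable {φ₁ φ₂ : Equiv.Perm (Fin n)} {A₁ A₂ : Set (Fin n)}

lemma FWF_delta (φ : Equiv.Perm (Fin n)) (A : Set (Fin n)) : FWF id id φ A :=
  ⟨fun _ => rfl, fun _ => rfl, fun _ _ => rfl, fun _ _ => rfl⟩

/-- Composition of partial permutations. -/
lemma instDelta :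
    pmul (FD id id φ₁ A₁) (FD id id φ₂ A₂)
      = FD id id (φ₁.trans φ₂) (A₁ ∩ ⇑φ₁ ⁻¹' A₂) := by
  have hθ1 := Fθ_invol (FWF_delta φ₁ A₁)
  have hθ2 := Fθ_invol (FWF_delta φ₂ A₂)
  have himg : ⇑(φ₁.trans φ₂) '' (A₁ ∩ ⇑φ₁ ⁻¹' A₂) = ⇑φ₂ '' (⇑φ₁ '' A₁ ∩ A₂) := by
    have h0 : ⇑(φ₁.trans φ₂) '' (A₁ ∩ ⇑φ₁ ⁻¹' A₂)
        = ⇑φ₂ '' (⇑φ₁ '' (A₁ ∩ ⇑φ₁ ⁻¹' A₂)) := by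
      rw [← Set.image_comp]; rfl
    rw [h0, Set.image_inter φ₁.injective, Set.image_preimage_eq _ φ₁.surjective]
  apply instance_master hθ1 hθ2 (Fθ_invol (FWF_delta _ _))
  · rintro (i | j) hx
    · by_cases hiA : i ∈ A₁ ∩ ⇑φ₁ ⁻¹' A₂
      · rw [Fθ_inl_mem hiA]
        show RGen _ (topBot (Sum.inl i)) (topBot (Sum.inr (φ₂ (φ₁ i))))
        have hiA2 : φ₁ i ∈ A₂ := hiA.2
        exact RGen.trans (stepU_tm (m := φ₁ i) hθ1 (Fθ_inl_mem hiA.1))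
          (stepD_mb (j := φ₂ (φ₁ i)) hθ2 (Fθ_inl_mem hiA2))
      · exfalso
        rw [Fθ_inl_not hiA] at hx
        exact hx rfl
    · by_cases hj : j ∈ ⇑(φ₁.trans φ₂) '' (A₁ ∩ ⇑φ₁ ⁻¹' A₂)
      · rw [Fθ_inr_mem hj]
        obtain ⟨a, ha, rfl⟩ := hj
        rw [Equiv.symm_apply_apply]
        show RGen _ (topBot (Sum.inr (φ₂ (φ₁ a)))) (topBot (Sum.inl a))
        have ha2 : φ₁ a ∈ A₂ := ha.2
        have e2 : Fθ id id φ₂ A₂ (Sum.inr (φ₂ (φ₁ a))) = Sum.inl (φ₁ a) := by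
          rw [Fθ_inr_mem (Set.mem_image_of_mem _ ha2), Equiv.symm_apply_apply]
        have e1 : Fθ id id φ₁ A₁ (Sum.inr (φ₁ a)) = Sum.inl a := by
          rw [Fθ_inr_mem (Set.mem_image_of_mem _ ha.1), Equiv.symm_apply_apply]
        exact RGen.trans (stepD_bm (m := φ₁ a) hθ2 e2) (stepU_mt (k := a) hθ1 e1)
      · exfalso
        rw [Fθ_inr_not hj] at hx
        exact hx rfl
  · rintro (i | j) hx
    · have hiA : i ∉ A₁ ∩ ⇑φ₁ ⁻¹' A₂ := by
        intro hc; rw [Fθ_inl_mem hc] at hx; simp at hx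
      by_cases hA1 : i ∈ A₁
      · have hA2 : φ₁ i ∉ A₂ := fun hc => hiA ⟨hA1, hc⟩
        refine sing1_top (m := φ₁ i) hθ1 hθ2 (Fθ_inl_mem hA1) ?_
        rw [Fθ_inl_not hA2]; rfl
      · refine sing0_top hθ1 hθ2 ?_
        rw [Fθ_inl_not hA1]; rfl
    · have hjA : j ∉ ⇑(φ₁.trans φ₂) '' (A₁ ∩ ⇑φ₁ ⁻¹' A₂) := by
        intro hc; rw [Fθ_inr_mem hc] at hx; simp at hx
      rw [himg] at hjA
      by_cases hjB : j ∈ ⇑φ₂ '' A₂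
      · obtain ⟨m, hm, rfl⟩ := hjB
        have hmA : m ∉ ⇑φ₁ '' A₁ := by
          intro hc
          exact hjA (Set.mem_image_of_mem _ ⟨hc, hm⟩)
        refine sing1_bot (m := m) hθ1 hθ2 ?_ ?_
        · rw [Fθ_inr_mem (Set.mem_image_of_mem _ hm), Equiv.symm_apply_apply]
        · rw [Fθ_inr_not hmA]; rfl
      · refine sing0_bot hθ1 hθ2 ?_
        rw [Fθ_inr_not hjB]; rfl

end InstDelta
end PBWork

namespace PBWork
open Dgm Function Equiv

variable {n : ℕ}

section InstMove
variable {a b c : Fin n} {A : Set (Fin n)}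

lemma swap_invol (u v : Fin n) : Involutive ⇑(Equiv.swap u v) :=
  fun z => Equiv.swap_apply_self u v z

lemma swap_image (haA : a ∈ A) (hbA : b ∉ A) :
    ⇑(Equiv.swap a b) '' A = insert b (A \ {a}) := by
  ext z
  constructor
  · rintro ⟨u, hu, rfl⟩
    by_cases hua : u = a
    · subst hua; rw [swap_apply_left]; exact Or.inl rfl
    · have hub : u ≠ b := fun hc => hbA (hc ▸ hu)
      rw [swap_apply_of_ne_of_ne hua hub]
      exact Or.inr ⟨hu, hua⟩
  · rintro (hzb | ⟨hz, hza⟩)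
    · exact ⟨a, haA, (swap_apply_left a b).trans hzb.symm⟩
    · refine ⟨z, hz, ?_⟩
      have hzb : z ≠ b := fun hc => hbA (hc ▸ hz)
      exact swap_apply_of_ne_of_ne hza hzb

/-- The key hooked-move product:
`(hook {b,c} + id_A) · (hook {c,a} + id_{A∖a∪b}) = (top hook {b,c}, bottom hook {c,a},
a ↦ b', identity on A∖{a})`. -/
lemma instMove (haA : a ∈ A) (hbA : b ∉ A) (hcA : c ∉ A)
    (hab : a ≠ b) (hac : a ≠ c) (hbc : b ≠ c) :
    pmul (FD (⇑(Equiv.swap b c)) (⇑(Equiv.swap b c)) 1 A)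
         (FD (⇑(Equiv.swap c a)) (⇑(Equiv.swap c a)) 1 (insert b (A \ {a})))
      = FD (⇑(Equiv.swap b c)) (⇑(Equiv.swap c a)) (Equiv.swap a b) A := by
  set C₂ : Set (Fin n) := insert b (A \ {a}) with hC₂def
  have hC1 : ∀ i ∈ A, Equiv.swap b c i = i := fun i hi =>
    swap_apply_of_ne_of_ne (fun hc' => hbA (hc' ▸ hi)) (fun hc' => hcA (hc' ▸ hi))
  have hC2 : ∀ i ∈ C₂, Equiv.swap c a i = i := by
    rintro i (hib | ⟨hiA, hia⟩)
    · rw [hib]; exact swap_apply_of_ne_of_ne hbc (Ne.symm hab)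
    · exact swap_apply_of_ne_of_ne (fun hc' => hcA (hc' ▸ hiA)) hia
  have hwf1 : FWF (⇑(Equiv.swap b c)) (⇑(Equiv.swap b c)) 1 A := FWF_P (swap_invol b c) hC1
  have hwf2 : FWF (⇑(Equiv.swap c a)) (⇑(Equiv.swap c a)) 1 C₂ := FWF_P (swap_invol c a) hC2
  have himg : ⇑(Equiv.swap a b) '' A = C₂ := swap_image haA hbA
  have hwfr : FWF (⇑(Equiv.swap b c)) (⇑(Equiv.swap c a)) (Equiv.swap a b) A :=
    ⟨swap_invol b c, swap_invol c a, hC1, by rw [himg]; exact hC2⟩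
  have hθ1 := Fθ_invol hwf1
  have hθ2 := Fθ_invol hwf2
  have hbC2 : b ∈ C₂ := Or.inl rfl
  have haC2 : a ∉ C₂ := by
    rintro (rfl | ⟨_, hc'⟩)
    · exact hab rfl
    · exact hc' rfl
  have hcC2 : c ∉ C₂ := by
    rintro (rfl | ⟨hc', _⟩)
    · exact hbc rfl
    · exact hcA hc'
  -- evaluation helpers
  have ev1t : ∀ i ∈ A, Fθ (⇑(Equiv.swap b c)) (⇑(Equiv.swap b c)) 1 A (Sum.inl i) = Sum.inr i := by
    intro i hi; rw [Fθ_inl_mem hi]; rfl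
  have ev1b : ∀ j ∈ A, Fθ (⇑(Equiv.swap b c)) (⇑(Equiv.swap b c)) 1 A (Sum.inr j) = Sum.inl j := by
    intro j hj; rw [Fθ_inr_mem (by rw [one_image]; exact hj)]; rfl
  have ev1t' : ∀ i, i ∉ A →
      Fθ (⇑(Equiv.swap b c)) (⇑(Equiv.swap b c)) 1 A (Sum.inl i) = Sum.inl (Equiv.swap b c i) := by
    intro i hi; rw [Fθ_inl_not hi]
  have ev1b' : ∀ j, j ∉ A →
      Fθ (⇑(Equiv.swap b c)) (⇑(Equiv.swap b c)) 1 A (Sum.inr j) = Sum.inr (Equiv.swap b c j) := by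
    intro j hj; rw [Fθ_inr_not (by rw [one_image]; exact hj)]
  have ev2t : ∀ i ∈ C₂, Fθ (⇑(Equiv.swap c a)) (⇑(Equiv.swap c a)) 1 C₂ (Sum.inl i) = Sum.inr i := by
    intro i hi; rw [Fθ_inl_mem hi]; rfl
  have ev2b : ∀ j ∈ C₂, Fθ (⇑(Equiv.swap c a)) (⇑(Equiv.swap c a)) 1 C₂ (Sum.inr j) = Sum.inl j := by
    intro j hj; rw [Fθ_inr_mem (by rw [one_image]; exact hj)]; rfl
  have ev2t' : ∀ i, i ∉ C₂ →
      Fθ (⇑(Equiv.swap c a)) (⇑(Equiv.swap c a)) 1 C₂ (Sum.inl i) = Sum.inl (Equiv.swap c a i) := by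
    intro i hi; rw [Fθ_inl_not hi]
  have ev2b' : ∀ j, j ∉ C₂ →
      Fθ (⇑(Equiv.swap c a)) (⇑(Equiv.swap c a)) 1 C₂ (Sum.inr j) = Sum.inr (Equiv.swap c a j) := by
    intro j hj; rw [Fθ_inr_not (by rw [one_image]; exact hj)]
  apply instance_master hθ1 hθ2 (Fθ_invol hwfr)
  · rintro (i | j) hx
    · by_cases hiA : i ∈ A
      · rw [Fθ_inl_mem hiA]
        by_cases hia : i = a
        · subst hia
          rw [swap_apply_left]
          show RGen _ (topBot (Sum.inl i)) (topBot (Sum.inr b))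
          refine RGen.trans (stepU_tm (m := i) hθ1 (ev1t i hiA)) ?_
          refine RGen.trans (stepD_mm (k := c) hθ2 (by rw [ev2t' i haC2, swap_apply_right])) ?_
          refine RGen.trans (stepU_mm (k := b) hθ1 (by rw [ev1b' c hcA, swap_apply_right])) ?_
          exact stepD_mb (j := b) hθ2 (ev2t b hbC2)
        · have hib : i ≠ b := fun hc' => hbA (hc' ▸ hiA)
          rw [swap_apply_of_ne_of_ne hia hib]
          show RGen _ (topBot (Sum.inl i)) (topBot (Sum.inr i))
          exact RGen.trans (stepU_tm (m := i) hθ1 (ev1t i hiA))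
            (stepD_mb (j := i) hθ2 (ev2t i (Or.inr ⟨hiA, hia⟩)))
      · rw [Fθ_inl_not hiA] at hx ⊢
        exact stepU_tt (k := Equiv.swap b c i) hθ1 (ev1t' i hiA)
    · by_cases hj : j ∈ ⇑(Equiv.swap a b) '' A
      · rw [Fθ_inr_mem hj, Equiv.symm_swap]
        rw [himg] at hj
        rcases hj with rfl | ⟨hjA, hja⟩
        · rw [swap_apply_right]
          show RGen _ (topBot (Sum.inr j)) (topBot (Sum.inl a))
          refine RGen.trans (stepD_bm (m := j) hθ2 (ev2b j hbC2)) ?_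
          refine RGen.trans (stepU_mm (k := c) hθ1 (by rw [ev1b' j hbA, swap_apply_left])) ?_
          refine RGen.trans (stepD_mm (k := a) hθ2 (by rw [ev2t' c hcC2, swap_apply_left])) ?_
          exact stepU_mt (k := a) hθ1 (ev1b a haA)
        · have hjb : j ≠ b := fun hc' => hbA (hc' ▸ hjA)
          rw [swap_apply_of_ne_of_ne hja hjb]
          show RGen _ (topBot (Sum.inr j)) (topBot (Sum.inl j))
          exact RGen.trans (stepD_bm (m := j) hθ2 (ev2b j (Or.inr ⟨hjA, hja⟩)))
            (stepU_mt (k := j) hθ1 (ev1b j hjA))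
      · rw [Fθ_inr_not hj] at hx ⊢
        rw [himg] at hj
        exact stepD_bb (k := Equiv.swap c a j) hθ2 (ev2b' j hj)
  · rintro (i | j) hx
    · have hiA : i ∉ A := by
        intro hc'; rw [Fθ_inl_mem hc'] at hx; simp at hx
      rw [Fθ_inl_not hiA] at hx
      have hswi : Equiv.swap b c i = i := by injection hx
      exact sing0_top hθ1 hθ2 (by rw [ev1t' i hiA, hswi])
    · have hjA : j ∉ ⇑(Equiv.swap a b) '' A := by
        intro hc'; rw [Fθ_inr_mem hc'] at hx; simp at hx
      rw [Fθ_inr_not hjA] at hx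
      rw [himg] at hjA
      have hswj : Equiv.swap c a j = j := by injection hx
      exact sing0_bot hθ1 hθ2 (by rw [ev2b' j hjA, hswj])

end InstMove
end PBWork

namespace PBWork
open Dgm Function

variable {n : ℕ}

/-! ### Closure properties of the product -/

lemma scan_of_fold {θ φ : PBV n → PBV n} (hθ : Involutive θ) (hφ : Involutive φ)
    (x : PBV n) (k : ℕ) (P : PBV n → Prop)
    (hfold : traj (sOf θ φ x) (tOf θ φ x) (topBot x) (k+1)
           = traj (sOf θ φ x) (tOf θ φ x) (topBot x) k)
    (hscan : ∀ i, i ≤ k → ∀ z : PBV n,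
      traj (sOf θ φ x) (tOf θ φ x) (topBot x) i = topBot z → P z) :
    ∀ y, RGen (prodEdges (DgmOf θ) (DgmOf φ)) (topBot x) (topBot y) → P y := by
  intro y hy
  obtain ⟨j, hj⟩ := rgen_to_range hθ hφ x hy
  obtain ⟨i, hik, hi⟩ := traj_range_of_fold (sOf_invol hθ hφ x) (tOf_invol hθ hφ x)
    (tOf_fix θ φ x) hfold j
  exact hscan i hik y (by rw [← hi, hj])

lemma isPB_pmul {α β : Dgm n} (hα : IsPB α) (hβ : IsPB β) : IsPB (pmul α β) := by
  obtain ⟨θ, hθ, rfl⟩ := exists_invol hα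
  obtain ⟨φ, hφ, rfl⟩ := exists_invol hβ
  intro u v w huv huw
  by_cases h1 : u = v
  · exact Or.inl h1
  by_cases h2 : u = w
  · exact Or.inr (Or.inl h2)
  exact Or.inr (Or.inr (partner_unique hθ hφ huv huw
    (fun hc => h1 hc.symm) (fun hc => h2 hc.symm)))

lemma domSet_pmul_subset {α β : Dgm n} (hα : IsPB α) (hβ : IsPB β) :
    domSet (pmul α β) ⊆ domSet α := by
  obtain ⟨θ, hθ, rfl⟩ := exists_invol hα
  obtain ⟨φ, hφ, rfl⟩ := exists_invol hβ
  rintro i ⟨j, hj⟩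
  have hj' : RGen (prodEdges (DgmOf θ) (DgmOf φ)) (topBot (Sum.inl i))
      (topBot (Sum.inr j)) := hj
  rcases hk : θ (Sum.inl i) with k | m
  · exfalso
    by_cases hik : k = i
    · subst hik
      exact Sum.inr_ne_inl (sing0_top hθ hφ hk _ hj')
    · -- top hook {i, k}: component is {top i, top k}
      have hP := scan_of_fold hθ hφ (Sum.inl i) 1
        (fun z => z = Sum.inl i ∨ z = Sum.inl k) ?_ ?_ _ hj'
      · rcases hP with h | h <;> exact Sum.inr_ne_inl h
      · -- fold at 1
        have e1 : traj (sOf θ φ (Sum.inl i)) (tOf θ φ (Sum.inl i)) (topBot (Sum.inl i)) 1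
            = Sum.inl k := by
          simp [traj_succ, hk]
        show traj _ _ _ 2 = traj _ _ _ 1
        rw [show (2:ℕ) = 1+1 from rfl, traj_succ, e1]
        simp
      · intro i' hi' z hz
        interval_cases i'
        · simp only [traj_zero, topBot_inl] at hz
          exact Or.inl (topBot_eq_top hz)
        · have e1 : traj (sOf θ φ (Sum.inl i)) (tOf θ φ (Sum.inl i)) (topBot (Sum.inl i)) 1
              = Sum.inl k := by
            simp [traj_succ, hk]
          rw [e1] at hz
          exact Or.inr (topBot_eq_top hz)
  · exact ⟨m, Or.inr ⟨hk, by rw [← hk, hθ]⟩⟩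

lemma IPB_pmul {r : ℕ} {α β : Dgm n} (hα : α ∈ IPB n r) (hβ : β ∈ IPB n r) :
    pmul α β ∈ IPB n r := by
  refine ⟨isPB_pmul hα.1 hβ.1, le_trans ?_ hα.2⟩
  exact Set.ncard_le_ncard (domSet_pmul_subset hα.1 hβ.1) (Set.toFinite _)

lemma genSet_subset_IPB {r : ℕ} {X : Set (Dgm n)} (hX : X ⊆ IPB n r) :
    genSet (pmul (n := n)) X ⊆ IPB n r := by
  intro x hx
  induction hx with
  | base h => exact hX h
  | mul _ _ ih1 ih2 => exact IPB_pmul ih1 ih2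

lemma genSet_mono {γ : Type*} (m : γ → γ → γ) {X Y : Set γ} (hXY : X ⊆ Y) :
    genSet m X ⊆ genSet m Y := by
  intro x hx
  induction hx with
  | base h => exact MClo.base (hXY h)
  | mul _ _ ih1 ih2 => exact MClo.mul ih1 ih2

/-! ### Extending a partial injection to a permutation -/

lemma exists_perm_extend {A : Set (Fin n)} {g : Fin n → Fin n} (hg : Set.InjOn g A) :
    ∃ φ : Equiv.Perm (Fin n), ∀ i ∈ A, φ i = g i := by
  classical
  have hbij : Set.BijOn g A (g '' A) := hg.bijOn_image
  let e₁ : ↥A ≃ ↥(g '' A) := Set.BijOn.equiv g hbij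
  have hcard : Fintype.card ↥(Aᶜ) = Fintype.card ↥((g '' A)ᶜ) := by
    rw [Fintype.card_compl_set, Fintype.card_compl_set, Fintype.card_congr e₁]
  let e₂ : ↥(Aᶜ) ≃ ↥((g '' A)ᶜ) := Fintype.equivOfCardEq hcard
  refine ⟨(Equiv.Set.sumCompl A).symm.trans ((e₁.sumCongr e₂).trans
    (Equiv.Set.sumCompl (g '' A))), fun i hi => ?_⟩
  rw [Equiv.trans_apply, Equiv.trans_apply, Equiv.Set.sumCompl_symm_apply_of_mem hi]
  rfl

end PBWork

namespace PBWork
open Dgm Function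

variable {n : ℕ}

/-- Every partial Brauer diagram is of the canonical form `FD μt μb φ A`. -/
lemma exists_F_form {α : Dgm n} (hα : IsPB α) :
    ∃ (μt μb : Fin n → Fin n) (φ : Equiv.Perm (Fin n)) (A : Set (Fin n)),
      FWF μt μb φ A ∧ α = FD μt μb φ A ∧ A = domSet α := by
  classical
  obtain ⟨θ, hθ, rfl⟩ := exists_invol hα
  have hAc : ∀ i, i ∈ domSet (DgmOf θ) ↔ ∃ j, θ (Sum.inl i) = Sum.inr j := by
    intro i
    constructor
    · rintro ⟨j, hj⟩
      rcases (dgmOf_r_invol hθ _ _).mp hj with h | h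
      · exact absurd h (by simp)
      · exact ⟨j, h⟩
    · rintro ⟨j, hj⟩
      exact ⟨j, (dgmOf_r_invol hθ _ _).mpr (Or.inr hj)⟩
  set A := domSet (DgmOf θ) with hAdef
  set g : Fin n → Fin n :=
    fun i => if h : ∃ j, θ (Sum.inl i) = Sum.inr j then h.choose else i with hgdef
  have hgA : ∀ i ∈ A, θ (Sum.inl i) = Sum.inr (g i) := by
    intro i hi
    have h := (hAc i).mp hi
    simp only [hgdef, dif_pos h]
    exact h.choose_spec
  have hginj : Set.InjOn g A := by
    intro i hi i' hi' he
    have h1 := hgA i hi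
    have h2 := hgA i' hi'
    rw [he] at h1
    have e1 := hθ (Sum.inl i)
    rw [h1] at e1
    have e2 := hθ (Sum.inl i')
    rw [h2] at e2
    exact Sum.inl.inj (e1.symm.trans e2)
  obtain ⟨φ, hφ⟩ := exists_perm_extend hginj
  set μt : Fin n → Fin n :=
    fun i => Sum.elim (fun k => k) (fun _ => i) (θ (Sum.inl i)) with hμt
  set μb : Fin n → Fin n :=
    fun j => Sum.elim (fun _ => j) (fun k => k) (θ (Sum.inr j)) with hμb
  have hμt_eval : ∀ i k, θ (Sum.inl i) = Sum.inl k → μt i = k := by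
    intro i k h; simp only [hμt, h, Sum.elim_inl]
  have hμt_eval' : ∀ i m, θ (Sum.inl i) = Sum.inr m → μt i = i := by
    intro i m h; simp only [hμt, h, Sum.elim_inr]
  have hμb_eval : ∀ j k, θ (Sum.inr j) = Sum.inr k → μb j = k := by
    intro j k h; simp only [hμb, h, Sum.elim_inr]
  have hμb_eval' : ∀ j m, θ (Sum.inr j) = Sum.inl m → μb j = j := by
    intro j m h; simp only [hμb, h, Sum.elim_inl]
  -- membership characterization of the codomain
  have hBc : ∀ j, j ∈ ⇑φ '' A ↔ ∃ i, θ (Sum.inr j) = Sum.inl i := by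
    intro j
    constructor
    · rintro ⟨i, hi, rfl⟩
      rw [hφ i hi]
      have := hθ (Sum.inl i)
      rw [hgA i hi] at this
      exact ⟨i, this⟩
    · rintro ⟨i, hi⟩
      have h2 : θ (Sum.inl i) = Sum.inr j := by
        have := hθ (Sum.inr j)
        rwa [hi] at this
      have hiA : i ∈ A := (hAc i).mpr ⟨j, h2⟩
      have : g i = j := by
        have := hgA i hiA
        rw [h2] at this
        exact (Sum.inr.inj this).symm
      exact ⟨i, hiA, by rw [hφ i hiA, this]⟩
  have hwf : FWF μt μb φ A := by
    refine ⟨?_, ?_, ?_, ?_⟩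
    · intro i
      rcases h : θ (Sum.inl i) with k | m
      · rw [hμt_eval i k h]
        have hk : θ (Sum.inl k) = Sum.inl i := by
          have := hθ (Sum.inl i); rwa [h] at this
        exact hμt_eval k i hk
      · rw [hμt_eval' i m h, hμt_eval' i m h]
    · intro j
      rcases h : θ (Sum.inr j) with m | k
      · rw [hμb_eval' j m h, hμb_eval' j m h]
      · rw [hμb_eval j k h]
        have hk : θ (Sum.inr k) = Sum.inr j := by
          have := hθ (Sum.inr j); rwa [h] at this
        exact hμb_eval k j hk
    · intro i hi
      exact hμt_eval' i (g i) (hgA i hi)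
    · intro j hj
      obtain ⟨i, hi⟩ := (hBc j).mp hj
      exact hμb_eval' j i hi
  refine ⟨μt, μb, φ, A, hwf, ?_, rfl⟩
  have : θ = Fθ μt μb φ A := by
    funext x
    rcases x with i | j
    · by_cases hi : i ∈ A
      · rw [Fθ_inl_mem hi, hφ i hi]
        exact hgA i hi
      · rw [Fθ_inl_not hi]
        rcases h : θ (Sum.inl i) with k | m
        · rw [hμt_eval i k h]
        · exact absurd ((hAc i).mpr ⟨m, h⟩) hi
    · by_cases hj : j ∈ ⇑φ '' A
      · rw [Fθ_inr_mem hj]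
        obtain ⟨i, hi⟩ := (hBc j).mp hj
        rw [hi]
        congr 1
        -- φ.symm j = i
        obtain ⟨i', hi', rfl⟩ := hj
        rw [Equiv.symm_apply_apply]
        -- θ (inr (φ i')) = inl i with φ i' = g i'
        rw [hφ i' hi'] at hi
        have h3 := hθ (Sum.inl i')
        rw [hgA i' hi'] at h3
        exact Sum.inl.inj (hi.symm.trans h3)
    
      · rw [Fθ_inr_not hj]
        rcases h : θ (Sum.inr j) with m | k
        · exact absurd ((hBc j).mpr ⟨m, h⟩) hj
        · rw [hμb_eval j k h]
    
  rw [FD, ← this]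

/-- The canonical three-factor decomposition. -/
lemma decomp_F {μt μb : Fin n → Fin n} {φ : Equiv.Perm (Fin n)} {A : Set (Fin n)}
    (hwf : FWF μt μb φ A) :
    FD μt μb φ A
      = pmul (pmul (FD μt μt 1 A) (FD id id φ A)) (FD μb μb 1 (⇑φ '' A)) := by
  have h1 : pmul (FD μt μt 1 A) (FD id id φ A) = FD μt id φ A := by
    have := sandL (ν := μt) (hwf := FWF_delta φ A) hwf.ht hwf.hAt
      (fun i hi => absurd rfl hi)
      (fun i hi => hwf.not_mem_t hi)
    rwa [Set.inter_self] at this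
  have hwfl : FWF μt id φ A := ⟨hwf.ht, fun _ => rfl, hwf.hAt, fun _ _ => rfl⟩
  have h2 : pmul (FD μt id φ A) (FD μb μb 1 (⇑φ '' A)) = FD μt μb φ A := by
    have := sandR (ν := μb) (C := ⇑φ '' A) hwf.hb hwfl hwf.hAb
      (fun j hj => absurd rfl hj)
      (fun j hj => hwf.not_mem_b hj)
    rwa [Set.inter_eq_self_of_subset_left (Set.subset_preimage_image _ _)] at this
  rw [h1, h2]

end PBWork

namespace PBWork
open Dgm Function

variable {n : ℕ}

/-- The idempotent generators in the top two D-classes. -/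
def gens (n r : ℕ) : Set (Dgm n) :=
  {α | α ∈ DPB n r ∪ DPB n (r - 1) ∧ IsIdpt α}

section Proj
variable {ν : Fin n → Fin n} {C : Set (Fin n)}

lemma combμ_self (ν : Fin n → Fin n) : combμ ν ν = ν := by
  funext x
  by_cases h : ν x = x
  · rw [combμ_eq₂ h]
  · rw [combμ_eq₁ h]

lemma FD_proj_idpt (hν : Involutive ν) (hC : ∀ i ∈ C, ν i = i) :
    IsIdpt (FD ν ν 1 C) := by
  show pmul _ _ = _
  rw [instG hν hν hC hC (fun x _ => Or.inl rfl) (fun x _ => Or.inl rfl),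
    combμ_self, Set.inter_self]

lemma proj_mem_gens {r : ℕ} (hν : Involutive ν) (hC : ∀ i ∈ C, ν i = i)
    (hcard : C.ncard = r ∨ C.ncard = r - 1) :
    FD ν ν 1 C ∈ gens n r := by
  refine ⟨?_, FD_proj_idpt hν hC⟩
  rcases hcard with h | h
  · exact Or.inl ⟨FD_isPB _ _ _ _, by rw [prank_FD (FWF_P hν hC), h]⟩
  · exact Or.inr ⟨FD_isPB _ _ _ _, by rw [prank_FD (FWF_P hν hC), h]⟩

lemma two_not_mem {C : Set (Fin n)} (h : C.ncard + 2 ≤ n) :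
    ∃ u v : Fin n, u ≠ v ∧ u ∉ C ∧ v ∉ C := by
  have hcompl : C.ncard + Cᶜ.ncard = n := by
    have := Set.ncard_add_ncard_compl C
    simpa using this
  have h2 : 1 < Cᶜ.ncard := by omega
  obtain ⟨u, v, hu, hv, huv⟩ := (Set.one_lt_ncard_iff (Set.toFinite _)).mp h2
  exact ⟨u, v, huv, hu, hv⟩

lemma ncard_insert2 {C : Set (Fin n)} {a b : Fin n} (hab : a ≠ b) (ha : a ∉ C) (hb : b ∉ C) :
    (insert a (insert b C)).ncard = C.ncard + 2 := by
  rw [Set.ncard_insert_of_notMem (by simp [hab, ha]) (Set.toFinite _),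
    Set.ncard_insert_of_notMem hb (Set.toFinite _)]

/-- Removing one hook from a matching. -/
def unhook (ν : Fin n → Fin n) (h : Fin n) : Fin n → Fin n :=
  fun z => if z = h ∨ z = ν h then z else ν z

lemma unhook_fix {h z : Fin n} (hz : z = h ∨ z = ν h) : unhook ν h z = z := if_pos hz
lemma unhook_eq {h z : Fin n} (hz : ¬(z = h ∨ z = ν h)) : unhook ν h z = ν z := if_neg hz

lemma unhook_invol (hν : Involutive ν) (h : Fin n) : Involutive (unhook ν h) := by
  intro z
  by_cases hz : z = h ∨ z = ν h
  · rw [unhook_fix hz, unhook_fix hz]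
  · rw [unhook_eq hz, unhook_eq ?_]
    · exact hν z
    · push_neg at hz ⊢
      constructor
      · intro hc
        exact hz.2 (by rw [← hc, hν])
      · intro hc
        exact hz.1 (by
          have := congrArg ν hc
          rwa [hν, hν] at this)
  
/-- Every projection of rank at most `r` lies in the subsemigroup generated by the
idempotents of the top two D-classes. -/
lemma proj_gen {r : ℕ} (h2 : r + 2 ≤ n) :
    ∀ (d : ℕ) (ν : Fin n → Fin n) (C : Set (Fin n)), Involutive ν →
      (∀ i ∈ C, ν i = i) → C.ncard ≤ r → r - C.ncard ≤ d →
      FD ν ν 1 C ∈ genSet (pmul (n := n)) (gens n r) := by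
  intro d
  induction d with
  | zero =>
    intro ν C hν hC hle hd
    exact MClo.base (proj_mem_gens hν hC (Or.inl (by omega)))
  | succ d ih =>
    intro ν C hν hC hle hd
    by_cases hbig : C.ncard + 1 ≥ r
    · exact MClo.base (proj_mem_gens hν hC (by omega))
    have hq : C.ncard + 2 ≤ r := by omega
    by_cases hhook : ∃ x, ν x ≠ x
    · obtain ⟨h₁, hh₁⟩ := hhook
      have hνh₁ : ν (ν h₁) = h₁ := hν h₁
      have hh₁C : h₁ ∉ C := fun hc => hh₁ (hC _ hc)
      have hνh₁C : ν h₁ ∉ C := fun hc => by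
        have := hC _ hc
        rw [hν] at this
        exact hh₁ this.symm
      have hne1 : ν h₁ ≠ h₁ := hh₁
      set C₁ : Set (Fin n) := insert h₁ (insert (ν h₁) C) with hC₁def
      have hcard1 : C₁.ncard = C.ncard + 2 :=
        ncard_insert2 (fun hc => hne1 hc.symm) hh₁C hνh₁C
      by_cases hsecond : ∃ x, ν x ≠ x ∧ x ≠ h₁ ∧ x ≠ ν h₁
      · -- two hooks
        obtain ⟨h₂, hh₂, hd1, hd2⟩ := hsecond
        have hνh₂ : ν (ν h₂) = h₂ := hν h₂
        have hh₂C : h₂ ∉ C := fun hc => hh₂ (hC _ hc)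
        have hνh₂C : ν h₂ ∉ C := fun hc => by
          have := hC _ hc
          rw [hν] at this
          exact hh₂ this.symm
        have hd3 : ν h₂ ≠ h₁ := fun hc => hd2 (by rw [← hc, hν])
        have hd4 : ν h₂ ≠ ν h₁ := fun hc => hd1 (by
          have := congrArg ν hc
          rwa [hν, hν] at this)
        set C₂ : Set (Fin n) := insert h₂ (insert (ν h₂) C) with hC₂def
        have hcard2 : C₂.ncard = C.ncard + 2 :=
          ncard_insert2 (fun hc => hh₂ hc.symm) hh₂C hνh₂C
        have hC1' : ∀ i ∈ C₁, (unhook ν h₁) i = i := by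
          rintro i (rfl | rfl | hi)
          · exact unhook_fix (Or.inl rfl)
          · exact unhook_fix (Or.inr rfl)
          · rw [unhook_eq (by
              push_neg
              exact ⟨fun hc => absurd (hc ▸ hi) hh₁C, fun hc => absurd (hc ▸ hi) hνh₁C⟩)]
            exact hC i hi
        have hC2' : ∀ i ∈ C₂, (unhook ν h₂) i = i := by
          rintro i (rfl | rfl | hi)
          · exact unhook_fix (Or.inl rfl)
          · exact unhook_fix (Or.inr rfl)
          · rw [unhook_eq (by
              push_neg
              exact ⟨fun hc => absurd (hc ▸ hi) hh₂C, fun hc => absurd (hc ▸ hi) hνh₂C⟩)]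
            exact hC i hi
        have hg1 : ∀ x, (unhook ν h₁) x ≠ x → ((unhook ν h₂) x = (unhook ν h₁) x ∨ (x ∈ C₂ ∧ (unhook ν h₁) x ∈ C₂)) := by
          intro x hx
          have hx1 : ¬(x = h₁ ∨ x = ν h₁) := fun hc => hx (unhook_fix hc)
          have he : (unhook ν h₁) x = ν x := unhook_eq hx1
          by_cases hx2 : x = h₂ ∨ x = ν h₂
          · right
            constructor
            · rcases hx2 with rfl | rfl
              · exact Or.inl rfl
              · exact Or.inr (Or.inl rfl)
            · rw [he]
              rcases hx2 with rfl | rfl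
              · exact Or.inr (Or.inl rfl)
              · rw [hν]; exact Or.inl rfl
          · left
            rw [he, unhook_eq hx2]
        have hg2 : ∀ x, (unhook ν h₂) x ≠ x → ((unhook ν h₁) x = (unhook ν h₂) x ∨ (x ∈ C₁ ∧ (unhook ν h₂) x ∈ C₁)) := by
          intro x hx
          have hx2 : ¬(x = h₂ ∨ x = ν h₂) := fun hc => hx (unhook_fix hc)
          have he : (unhook ν h₂) x = ν x := unhook_eq hx2
          by_cases hx1 : x = h₁ ∨ x = ν h₁
          · right
            constructor
            · rcases hx1 with rfl | rfl
              · exact Or.inl rfl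
              · exact Or.inr (Or.inl rfl)
            · rw [he]
              rcases hx1 with rfl | rfl
              · exact Or.inr (Or.inl rfl)
              · rw [hν]; exact Or.inl rfl
          · left
            rw [he, unhook_eq hx1]
        have hcomb : combμ (unhook ν h₁) (unhook ν h₂) = ν := by
          funext z
          by_cases hz1 : z = h₁ ∨ z = ν h₁
          · rw [combμ_eq₂ (unhook_fix hz1)]
            have hne : ¬(z = h₂ ∨ z = ν h₂) := by
              push_neg
              rcases hz1 with rfl | rfl
              · exact ⟨fun hc => hd1 hc.symm, fun hc => hd3 hc.symm⟩
              · exact ⟨fun hc => hd2 hc.symm, fun hc => hd4 hc.symm⟩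
            rw [unhook_eq hne]
          · by_cases hz0 : ν z = z
            · have : (unhook ν h₁) z = z := by rw [unhook_eq hz1, hz0]
              rw [combμ_eq₂ this]
              by_cases hz2 : z = h₂ ∨ z = ν h₂
              · rw [unhook_fix hz2, hz0]
              · rw [unhook_eq hz2, hz0]
            · have : (unhook ν h₁) z ≠ z := by rw [unhook_eq hz1]; exact hz0
              rw [combμ_eq₁ this, unhook_eq hz1]
        have hinter : C₁ ∩ C₂ = C := by
          ext z
          constructor
          · rintro ⟨h1', h2'⟩
            rcases h1' with rfl | rfl | hz
            · rcases h2' with h' | h' | h'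
              · exact absurd h'.symm hd1
              · exact absurd h'.symm hd3
              · exact h'
            · rcases h2' with h' | h' | h'
              · exact absurd h'.symm hd2
              · exact absurd h'.symm hd4
              · exact h'
            · exact hz
          · intro hz
            exact ⟨Or.inr (Or.inr hz), Or.inr (Or.inr hz)⟩
        have hprod := instG (unhook_invol hν h₁) (unhook_invol hν h₂) hC1' hC2' hg1 hg2
        rw [hcomb, hinter] at hprod
        rw [← hprod]
        exact MClo.mul
          (ih (unhook ν h₁) C₁ (unhook_invol hν h₁) hC1' (by omega) (by omega))
          (ih (unhook ν h₂) C₂ (unhook_invol hν h₂) hC2' (by omega) (by omega))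
      · -- exactly one hook
        push_neg at hsecond
        have honehook : ∀ x, ν x ≠ x → x = h₁ ∨ x = ν h₁ := by
          intro x hx
          by_contra hc
          push_neg at hc
          exact hc.2 (hsecond x hx hc.1)
        obtain ⟨u, v, huv, hu, hv⟩ := two_not_mem (C := C₁) (by omega)
        set C₂ : Set (Fin n) := insert u (insert v C) with hC₂def
        have huC : u ∉ C := fun hc => hu (Or.inr (Or.inr hc))
        have hvC : v ∉ C := fun hc => hv (Or.inr (Or.inr hc))
        have hcard2 : C₂.ncard = C.ncard + 2 := ncard_insert2 huv huC hvC
        have hC2' : ∀ i ∈ C₂, ν i = i := by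
          rintro i (rfl | rfl | hi)
          · by_contra hc
            rcases honehook i hc with rfl | rfl
            · exact hu (Or.inl rfl)
            · exact hu (Or.inr (Or.inl rfl))
          · by_contra hc
            rcases honehook i hc with rfl | rfl
            · exact hv (Or.inl rfl)
            · exact hv (Or.inr (Or.inl rfl))
          · exact hC i hi
        have hC1' : ∀ i ∈ C₁, id i = i := fun i _ => rfl
        have hg1 : ∀ x : Fin n, id x ≠ x → (ν x = id x ∨ (x ∈ C₂ ∧ id x ∈ C₂)) := by
          intro x hx; exact absurd rfl hx
        have hg2 : ∀ x, ν x ≠ x → ((id x : Fin n) = ν x ∨ (x ∈ C₁ ∧ ν x ∈ C₁)) := by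
          intro x hx
          right
          rcases honehook x hx with rfl | rfl
          · exact ⟨Or.inl rfl, Or.inr (Or.inl rfl)⟩
          · exact ⟨Or.inr (Or.inl rfl), by rw [hν]; exact Or.inl rfl⟩
        have hcomb : combμ id ν = ν := by
          funext z
          exact combμ_eq₂ rfl
        have hinter : C₁ ∩ C₂ = C := by
          ext z
          constructor
          · rintro ⟨h1', h2'⟩
            rcases h1' with rfl | rfl | hz
            · rcases h2' with h' | h' | h'
              · exact absurd h'.symm (fun hc => hu (by rw [hc]; exact Or.inl rfl))
              · exact absurd h'.symm (fun hc => hv (by rw [hc]; exact Or.inl rfl))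
              · exact h'
            · rcases h2' with h' | h' | h'
              · exact absurd h'.symm (fun hc => hu (by rw [hc]; exact Or.inr (Or.inl rfl)))
              · exact absurd h'.symm (fun hc => hv (by rw [hc]; exact Or.inr (Or.inl rfl)))
              · exact h'
            · exact hz
          · intro hz
            exact ⟨Or.inr (Or.inr hz), Or.inr (Or.inr hz)⟩
        have hprod := instG (fun z => rfl) hν hC1' hC2' hg1 hg2
        rw [hcomb, hinter] at hprod
        rw [← hprod]
        exact MClo.mul
          (ih id C₁ (fun z => rfl) hC1' (by omega) (by omega))
          (ih ν C₂ hν hC2' (by omega) (by omega))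
    · -- no hooks : pad the identity
      push_neg at hhook
      obtain ⟨u, v, huv, hu, hv⟩ := two_not_mem (C := C) (by omega)
      have hC1 : ∀ i ∈ insert u C, ν i = i := fun i _ => hhook i
      have hC2 : ∀ i ∈ insert v C, ν i = i := fun i _ => hhook i
      have hg : ∀ x, ν x ≠ x → False := fun x hx => hx (hhook x)
      have hprod := instG hν hν hC1 hC2
        (fun x hx => absurd (hhook x) hx)
        (fun x hx => absurd (hhook x) hx)
      rw [combμ_self] at hprod
      have hinter : insert u C ∩ insert v C = C := by
        ext z
        constructor
        · rintro ⟨h1', h2'⟩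
          rcases h1' with rfl | hz
          · rcases h2' with h' | h'
            · exact absurd h' huv
            · exact h'
          · exact hz
        · intro hz
          exact ⟨Or.inr hz, Or.inr hz⟩
      rw [hinter] at hprod
      rw [← hprod]
      have hin1 : (insert u C).ncard = C.ncard + 1 :=
        Set.ncard_insert_of_notMem hu (Set.toFinite _)
      have hin2 : (insert v C).ncard = C.ncard + 1 :=
        Set.ncard_insert_of_notMem hv (Set.toFinite _)
      exact MClo.mul
        (ih ν (insert u C) hν hC1 (by omega) (by omega))
        (ih ν (insert v C) hν hC2 (by omega) (by omega))

end Proj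
end PBWork

namespace PBWork
open Dgm Function Equiv

variable {n : ℕ}

lemma id_invol : Involutive (id : Fin n → Fin n) := fun _ => rfl

lemma one_not_mem {C : Set (Fin n)} (h : C.ncard + 1 ≤ n) : ∃ u : Fin n, u ∉ C := by
  have hcompl : C.ncard + Cᶜ.ncard = n := by
    have := Set.ncard_add_ncard_compl C
    simpa using this
  have h2 : 0 < Cᶜ.ncard := by omega
  obtain ⟨u, hu⟩ := (Set.ncard_pos (Set.toFinite _)).mp h2
  exact ⟨u, hu⟩

/-- The elementary move `a ↦ b` (with `a ∈ A`, `b ∉ A`) is a product of idempotents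
of the top two D-classes. -/
lemma elem_gen {r : ℕ} (h2 : r + 2 ≤ n) {a b : Fin n} {A : Set (Fin n)}
    (haA : a ∈ A) (hbA : b ∉ A) (hA : A.ncard ≤ r) :
    FD id id (Equiv.swap a b) A ∈ genSet (pmul (n := n)) (gens n r) := by
  have hab : a ≠ b := fun hc => hbA (hc ▸ haA)
  obtain ⟨c, hc⟩ : ∃ c, c ∉ insert b A := by
    apply one_not_mem
    rw [Set.ncard_insert_of_notMem hbA (Set.toFinite _)]
    omega
  have hcb : c ≠ b := fun hc' => hc (by rw [hc']; exact Or.inl rfl)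
  have hcA : c ∉ A := fun hc' => hc (Or.inr hc')
  have hac : a ≠ c := fun hc' => hcA (hc' ▸ haA)
  have hbc : b ≠ c := Ne.symm hcb
  set C₂ : Set (Fin n) := insert b (A \ {a}) with hC₂def
  have hm := instMove haA hbA hcA hab hac hbc
  have hC1 : ∀ i ∈ A, Equiv.swap b c i = i := fun i hi =>
    swap_apply_of_ne_of_ne (fun h' => hbA (h' ▸ hi)) (fun h' => hcA (h' ▸ hi))
  have hC2A : ∀ j ∈ C₂, Equiv.swap c a j = j := by
    rintro j (hjb | ⟨hjA, hja⟩)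
    · rw [hjb]; exact swap_apply_of_ne_of_ne hbc (Ne.symm hab)
    · exact swap_apply_of_ne_of_ne (fun h' => hcA (h' ▸ hjA)) hja
  have himg : ⇑(Equiv.swap a b) '' A = C₂ := swap_image haA hbA
  have hwfM : FWF (⇑(Equiv.swap b c)) (⇑(Equiv.swap c a)) (Equiv.swap a b) A :=
    ⟨swap_invol b c, swap_invol c a, hC1, by rw [himg]; exact hC2A⟩
  -- step u₁ : absorb left identity projection
  have hu₁ : pmul (FD id id 1 A) (FD (⇑(Equiv.swap b c)) (⇑(Equiv.swap c a)) (Equiv.swap a b) A)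
      = FD id (⇑(Equiv.swap c a)) (Equiv.swap a b) A := by
    have := sandL (ν := id) (C := A) id_invol hwfM (fun i _ => rfl)
      (fun i hi => ?_) (fun i hi => absurd rfl hi)
    · rwa [Set.inter_self] at this
    · rcases swap_apply_ne_self_iff.mp hi with ⟨_, rfl | rfl⟩
      · exact ⟨hbA, rfl⟩
      · exact ⟨hcA, rfl⟩
  have hwfL : FWF id (⇑(Equiv.swap c a)) (Equiv.swap a b) A :=
    ⟨id_invol, swap_invol c a, fun _ _ => rfl, by rw [himg]; exact hC2A⟩
  have haC2 : a ∉ C₂ := by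
    rintro (h' | ⟨_, h'⟩)
    · exact hab h'
    · exact h' rfl
  have hcC2 : c ∉ C₂ := by
    rintro (h' | ⟨h', _⟩)
    · exact hcb h'
    · exact hcA h'
  have hpre : A ∩ ⇑(Equiv.swap a b) ⁻¹' C₂ = A := by
    apply Set.inter_eq_self_of_subset_left
    intro i hi
    show Equiv.swap a b i ∈ C₂
    by_cases hia : i = a
    · rw [hia, swap_apply_left]; exact Or.inl rfl
    · rw [swap_apply_of_ne_of_ne hia (fun h' => hbA (by rw [← h']; exact hi))]
      exact Or.inr ⟨hi, hia⟩
  have hε : pmul (FD id (⇑(Equiv.swap c a)) (Equiv.swap a b) A) (FD id id 1 C₂)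
      = FD id id (Equiv.swap a b) A := by
    have := sandR (ν := id) (C := C₂) id_invol hwfL (fun j _ => rfl)
      (fun j hj => ?_) (fun j hj => absurd rfl hj)
    · rwa [hpre] at this
    · rcases swap_apply_ne_self_iff.mp hj with ⟨_, rfl | rfl⟩
      · exact ⟨hcC2, rfl⟩
      · exact ⟨haC2, rfl⟩
  -- cardinalities
  have hq1 : 1 ≤ A.ncard := (Set.ncard_pos (Set.toFinite _)).mpr ⟨a, haA⟩
  have hcard2 : C₂.ncard = A.ncard := by
    rw [Set.ncard_insert_of_notMem (fun h' => hbA h'.1 : b ∉ A \ {a}) (Set.toFinite _),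
      Set.ncard_diff_singleton_of_mem haA]
    omega
  -- memberships
  have m1 : FD id id 1 A ∈ genSet (pmul (n := n)) (gens n r) :=
    proj_gen h2 r id A id_invol (fun _ _ => rfl) hA (by omega)
  have m2 : FD (⇑(Equiv.swap b c)) (⇑(Equiv.swap b c)) 1 A ∈ genSet (pmul (n := n)) (gens n r) :=
    proj_gen h2 r _ A (swap_invol b c) hC1 hA (by omega)
  have m3 : FD (⇑(Equiv.swap c a)) (⇑(Equiv.swap c a)) 1 C₂ ∈ genSet (pmul (n := n)) (gens n r) :=
    proj_gen h2 r _ C₂ (swap_invol c a) hC2A (by omega) (by omega)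
  have m4 : FD id id 1 C₂ ∈ genSet (pmul (n := n)) (gens n r) :=
    proj_gen h2 r id C₂ id_invol (fun _ _ => rfl) (by omega) (by omega)
  rw [← hε, ← hu₁, ← hm]
  exact MClo.mul (MClo.mul m1 (MClo.mul m2 m3)) m4

end PBWork

namespace PBWork
open Dgm Function Equiv

variable {n : ℕ}

lemma delta_factor (u v : Fin n) (φ : Equiv.Perm (Fin n)) (A : Set (Fin n)) :
    FD id id φ A = pmul (FD id id (Equiv.swap u v) A)
      (FD id id ((Equiv.swap u v).trans φ) (⇑(Equiv.swap u v) '' A)) := by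
  rw [instDelta]
  have e1 : (Equiv.swap u v).trans ((Equiv.swap u v).trans φ) = φ :=
    Equiv.ext fun x => by simp [Equiv.trans_apply, Equiv.swap_apply_self]
  have e2 : A ∩ ⇑(Equiv.swap u v) ⁻¹' (⇑(Equiv.swap u v) '' A) = A := by
    rw [Set.preimage_image_eq A (Equiv.swap u v).injective, Set.inter_self]
  rw [e1, e2]

/-- Every partial permutation diagram of rank at most `r ≤ n - 2` is a product of
idempotents of the top two D-classes. -/
lemma perm_gen {r : ℕ} (h2 : r + 2 ≤ n) :
    ∀ (m : ℕ) (φ : Equiv.Perm (Fin n)) (A : Set (Fin n)), A.ncard ≤ r →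
      {i ∈ A | φ i ≠ i}.ncard ≤ m →
      FD id id φ A ∈ genSet (pmul (n := n)) (gens n r) := by
  intro m
  induction m with
  | zero =>
    intro φ A hA hm
    have hfix : ∀ i ∈ A, φ i = i := by
      intro i hi
      by_contra hne
      have hmem : i ∈ {i ∈ A | φ i ≠ i} := ⟨hi, hne⟩
      have := (Set.ncard_pos (Set.toFinite _)).mpr ⟨i, hmem⟩
      omega
    have himg : ⇑φ '' A = A := by
      apply Set.Subset.antisymm
      · rintro _ ⟨x, hx, rfl⟩
        rw [hfix x hx]
        exact hx
      · intro j hj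
        exact ⟨j, hj, hfix j hj⟩
    have heq : FD id id φ A = FD id id 1 A := by
      apply congrArg DgmOf
      funext x
      rcases x with i | j
      · by_cases hi : i ∈ A
        · rw [Fθ_inl_mem hi, Fθ_inl_mem hi, hfix i hi]
          rfl
        · rw [Fθ_inl_not hi, Fθ_inl_not hi]
      · by_cases hj : j ∈ A
        · rw [Fθ_inr_mem (show j ∈ ⇑φ '' A by rw [himg]; exact hj),
            Fθ_inr_mem (show j ∈ ⇑(1 : Equiv.Perm (Fin n)) '' A by rw [one_image]; exact hj)]
          have : φ.symm j = j := φ.symm_apply_eq.mpr (hfix j hj).symm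
          rw [this]
          rfl
        · rw [Fθ_inr_not (show j ∉ ⇑φ '' A by rw [himg]; exact hj),
            Fθ_inr_not (show j ∉ ⇑(1 : Equiv.Perm (Fin n)) '' A by rw [one_image]; exact hj)]
    rw [heq]
    exact proj_gen h2 r id A id_invol (fun _ _ => rfl) hA (by omega)
  | succ m ih =>
    intro φ A hA hm
    by_cases hm' : {i ∈ A | φ i ≠ i}.ncard ≤ m
    · exact ih φ A hA hm'
    have hpos : 0 < {i ∈ A | φ i ≠ i}.ncard := by omega
    obtain ⟨a₀, ha₀mem⟩ := (Set.ncard_pos (Set.toFinite _)).mp hpos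
    obtain ⟨ha₀A, ha₀⟩ := ha₀mem
    by_cases hbA : φ a₀ ∈ A
    · -- occupied target : evacuate first
      obtain ⟨t, htA⟩ : ∃ t : Fin n, t ∉ A := one_not_mem (by omega)
      have hbt : φ a₀ ≠ t := fun hc => htA (hc ▸ hbA)
      have hab : a₀ ≠ φ a₀ := fun hc => ha₀ hc.symm
      have hat : a₀ ≠ t := fun hc => htA (hc ▸ ha₀A)
      have hbne : φ (φ a₀) ≠ φ a₀ := fun hc => ha₀ (by
        have := φ.injective hc
        rw [this])
      set b := φ a₀ with hbdef
      set s₁ := Equiv.swap b t with hs₁def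
      set A₁ := ⇑s₁ '' A with hA₁def
      have hA₁ : A₁ = insert t (A \ {b}) := swap_image hbA htA
      have ha₀A₁ : a₀ ∈ A₁ := by
        rw [hA₁]
        exact Or.inr ⟨ha₀A, hab⟩
      have hbA₁ : b ∉ A₁ := by
        rw [hA₁]
        rintro (h' | ⟨_, h'⟩)
        · exact hbt h'
        · exact h' rfl
      set ψ := s₁.trans φ with hψdef
      have hs₁a₀ : s₁ a₀ = a₀ := swap_apply_of_ne_of_ne hab hat
      have hψa₀ : ψ a₀ = b := by
        rw [hψdef, Equiv.trans_apply, hs₁a₀]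
      set s₂ := Equiv.swap a₀ b with hs₂def
      set A₂ := ⇑s₂ '' A₁ with hA₂def
      have hA₂ : A₂ = insert b (A₁ \ {a₀}) := swap_image ha₀A₁ hbA₁
      set χ := s₂.trans ψ with hχdef
      have hfact : FD id id φ A = pmul (FD id id s₁ A) (FD id id ψ A₁) :=
        delta_factor b t φ A
      have hfact2 : FD id id ψ A₁ = pmul (FD id id s₂ A₁) (FD id id χ A₂) :=
        delta_factor a₀ b ψ A₁
      have hcardA₁ : A₁.ncard = A.ncard := Set.ncard_image_of_injective _ s₁.injective
      have hcardA₂ : A₂.ncard = A.ncard := by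
        rw [hA₂def, Set.ncard_image_of_injective _ s₂.injective, hcardA₁]
      -- misplaced count for (χ, A₂)
      have hsub : {i ∈ A₂ | χ i ≠ i} ⊆ insert t (({i ∈ A | φ i ≠ i} \ {a₀}) \ {b}) := by
        rintro i ⟨hiA₂, hiχ⟩
        rw [hA₂] at hiA₂
        rcases hiA₂ with rfl | ⟨hiA₁, hia₀⟩
        · -- i = b : χ b = ψ (s₂ b) = ψ a₀ = b, contradiction
          exfalso
          apply hiχ
          rw [hχdef, Equiv.trans_apply, hs₂def, swap_apply_right, hψa₀]
        · have hib : i ≠ b := fun hc => hbA₁ (hc ▸ hiA₁)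
          have hs₂i : s₂ i = i := swap_apply_of_ne_of_ne hia₀ hib
          have hχi : χ i = ψ i := by rw [hχdef, Equiv.trans_apply, hs₂i]
          rw [hA₁] at hiA₁
          rcases hiA₁ with rfl | ⟨hiA, _⟩
          · exact Or.inl rfl
          · have hit : i ≠ t := fun hc => htA (hc ▸ hiA)
            have hs₁i : s₁ i = i := swap_apply_of_ne_of_ne hib hit
            have hψi : ψ i = φ i := by rw [hψdef, Equiv.trans_apply, hs₁i]
            refine Or.inr ⟨⟨⟨hiA, ?_⟩, hia₀⟩, hib⟩
            rw [← hψi, ← hχi]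
            exact hiχ
      have hbmem : b ∈ {i ∈ A | φ i ≠ i} \ {a₀} := ⟨⟨hbA, hbne⟩, fun hc => hab hc.symm⟩
      have hcount : {i ∈ A₂ | χ i ≠ i}.ncard ≤ m := by
        have h1 := Set.ncard_le_ncard hsub (Set.toFinite _)
        have h2 := Set.ncard_insert_le t (({i ∈ A | φ i ≠ i} \ {a₀}) \ {b})
        have h3 : (({i ∈ A | φ i ≠ i} \ {a₀}) \ {b}).ncard
            = ({i ∈ A | φ i ≠ i} \ {a₀}).ncard - 1 :=
          Set.ncard_diff_singleton_of_mem hbmem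
        have h4 : ({i ∈ A | φ i ≠ i} \ {a₀}).ncard = {i ∈ A | φ i ≠ i}.ncard - 1 :=
          Set.ncard_diff_singleton_of_mem (show a₀ ∈ {i ∈ A | φ i ≠ i} from ⟨ha₀A, ha₀⟩)
        have h5 : 1 ≤ ({i ∈ A | φ i ≠ i} \ {a₀}).ncard :=
          (Set.ncard_pos (Set.toFinite _)).mpr ⟨b, hbmem⟩
        omega
      rw [hfact, hfact2]
      exact MClo.mul (elem_gen h2 hbA htA hA)
        (MClo.mul (elem_gen h2 ha₀A₁ hbA₁ (by omega))
          (ih χ A₂ (by omega) hcount))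
    · -- free target : one step
      have hab : a₀ ≠ φ a₀ := fun hc => ha₀ hc.symm
      set b := φ a₀ with hbdef
      set s := Equiv.swap a₀ b with hsdef
      set A₁ := ⇑s '' A with hA₁def
      have hA₁ : A₁ = insert b (A \ {a₀}) := swap_image ha₀A hbA
      set ψ := s.trans φ with hψdef
      have hfact : FD id id φ A = pmul (FD id id s A) (FD id id ψ A₁) :=
        delta_factor a₀ b φ A
      have hcardA₁ : A₁.ncard = A.ncard := Set.ncard_image_of_injective _ s.injective
      have hseq : {i ∈ A₁ | ψ i ≠ i} = {i ∈ A | φ i ≠ i} \ {a₀} := by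
        ext i
        constructor
        · rintro ⟨hiA₁, hiψ⟩
          rw [hA₁] at hiA₁
          rcases hiA₁ with rfl | ⟨hiA, hia₀⟩
          · exfalso
            apply hiψ
            rw [hψdef, Equiv.trans_apply, hsdef, swap_apply_right]
          · have hib : i ≠ b := fun hc => hbA (hc ▸ hiA)
            have hsi : s i = i := swap_apply_of_ne_of_ne hia₀ hib
            refine ⟨⟨hiA, ?_⟩, hia₀⟩
            rw [← show ψ i = φ i from by rw [hψdef, Equiv.trans_apply, hsi]]
            exact hiψ
        · rintro ⟨⟨hiA, hiφ⟩, hia₀⟩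
          have hia₀' : i ≠ a₀ := hia₀
          have hib : i ≠ b := fun hc => hbA (hc ▸ hiA)
          have hsi : s i = i := swap_apply_of_ne_of_ne hia₀' hib
          refine ⟨by rw [hA₁]; exact Or.inr ⟨hiA, hia₀'⟩, ?_⟩
          rw [show ψ i = φ i from by rw [hψdef, Equiv.trans_apply, hsi]]
          exact hiφ
      have hcount : {i ∈ A₁ | ψ i ≠ i}.ncard ≤ m := by
        rw [hseq, Set.ncard_diff_singleton_of_mem (show a₀ ∈ {i ∈ A | φ i ≠ i} from ⟨ha₀A, ha₀⟩)]
        omega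
      rw [hfact]
      exact MClo.mul (elem_gen h2 ha₀A hbA hA) (ih ψ A₁ (by omega) hcount)

end PBWork

namespace PBWork
open Dgm Function

variable {n : ℕ}

lemma IPB_subset_gen {r : ℕ} (h1 : 1 ≤ r) (h2 : r + 2 ≤ n) :
    IPB n r ⊆ genSet (pmul (n := n)) (gens n r) := by
  rintro α ⟨hPB, hrank⟩
  obtain ⟨μt, μb, φ, A, hwf, rfl, hAdom⟩ := exists_F_form hPB
  have hA : A.ncard ≤ r := by
    have := prank_FD hwf
    omega
  rw [decomp_F hwf]
  refine MClo.mul (MClo.mul ?_ ?_) ?_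
  · exact proj_gen h2 r μt A hwf.ht hwf.hAt hA (by omega)
  · exact perm_gen h2 ({i ∈ A | φ i ≠ i}.ncard) φ A hA le_rfl
  · refine proj_gen h2 r μb (⇑φ '' A) hwf.hb hwf.hAb ?_ (by omega)
    rw [Set.ncard_image_of_injective _ φ.injective]
    exact hA

end PBWork


/-- For `1 ≤ r ≤ n - 2`, the ideal `I_r(PB_n)` is generated
by its top two D-classes, and also by the idempotents therein. -/
theorem IPB_generated_by_top_two (n r : ℕ) (h1 : 1 ≤ r) (h2 : r + 2 ≤ n) :
    IPB n r = genSet (pmul (n := n)) (DPB n r ∪ DPB n (r - 1)) ∧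
    IPB n r = genSet (pmul (n := n)) {α | α ∈ DPB n r ∪ DPB n (r - 1) ∧ IsIdpt α} := by
  have hDsub : DPB n r ∪ DPB n (r - 1) ⊆ IPB n r := by
    rintro α (⟨hp, hq⟩ | ⟨hp, hq⟩)
    · exact ⟨hp, le_of_eq hq⟩
    · exact ⟨hp, by omega⟩
  have hEsub : {α | α ∈ DPB n r ∪ DPB n (r - 1) ∧ Dgm.IsIdpt α}
      ⊆ DPB n r ∪ DPB n (r - 1) := fun α hα => hα.1
  have hmain : IPB n r ⊆ genSet (pmul (n := n))
      {α | α ∈ DPB n r ∪ DPB n (r - 1) ∧ Dgm.IsIdpt α} :=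
    PBWork.IPB_subset_gen h1 h2
  constructor
  · apply Set.Subset.antisymm
    · exact hmain.trans (PBWork.genSet_mono _ hEsub)
    · exact PBWork.genSet_subset_IPB hDsub
  · apply Set.Subset.antisymm
    · exact hmain
    · exact PBWork.genSet_subset_IPB (hEsub.trans hDsub)
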